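/- arXiv:1804.05660 — 5 statements merged into one kernel-verified Lean document; each statement's English description precedes it below -/
import Mathlib

section
/- Let $X$ be a Banach space with a system of projections $(P_\gamma)_{\gamma\in\Gamma}$ as above (pairwise disjoint, uniformly bounded, with shrinking dense span properties). For a finite set $F\subseteq\Gamma$ define $\rho(F) = \sup\{\|\sum_{\gamma\in F} P_\gamma^* f\| : f\in X^*, \|P_\gamma^* f\| \le 1 \text{ for all } \gamma\in F\}$. If $(F^\alpha)$ is a net of finite subsets of $\Gamma$ such that $\liminf_\alpha F^\alpha = \bigcup_\alpha \bigcap_{\beta\ge\alpha} F^\beta$ is infinite, then $\rho(F^\alpha) \to \infty$. -/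
open Filter
open NormedSpace Topology
open scoped ENNReal NNReal

noncomputable section

variable {X : Type*} [NormedAddCommGroup X] [NormedSpace ℝ X] {Γ : Type*}

/-- The adjoint action: `P γ* f = f ∘ P γ`. -/
def Pstar (P : Γ → X →L[ℝ] X) (γ : Γ) (f : StrongDual ℝ X) : StrongDual ℝ X :=
  f.comp (P γ)

/-- The range of `f`: the set of norms of its non-zero components. -/
def ranSet (P : Γ → X →L[ℝ] X) (f : StrongDual ℝ X) : Set ℝ :=
  {r | ∃ γ, Pstar P γ f ≠ 0 ∧ ‖Pstar P γ f‖ = r}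

/-- `pfun P f k` is the `k`-th largest element of `ranSet P f` (for `k ≥ 1`),
with value `0` if fewer than `k` values exist (`sSup ∅ = 0` in `ℝ`). -/
def pfun (P : Γ → X →L[ℝ] X) (f : StrongDual ℝ X) : ℕ → ℝ
  | 0 => 0
  | 1 => sSup (ranSet P f)
  | (k + 2) => sSup {r | r ∈ ranSet P f ∧ r < pfun P f (k + 1)}

/-- `qfun P f k = p_k(f) - p_{k+1}(f)`. -/
def qfun (P : Γ → X →L[ℝ] X) (f : StrongDual ℝ X) (k : ℕ) : ℝ :=
  pfun P f k - pfun P f (k + 1)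

/-- `Gset P f k = {γ ∈ supp f : ‖P γ* f‖ ≥ p_k(f)}`. -/
def Gset (P : Γ → X →L[ℝ] X) (f : StrongDual ℝ X) (k : ℕ) : Set Γ :=
  {γ | Pstar P γ f ≠ 0 ∧ pfun P f k ≤ ‖Pstar P γ f‖}

/-- `rho P A`: the supremum, over finite subsets `S ⊆ A` and functionals `f` whose
components on `S` have norm at most `1`, of `‖∑_{γ ∈ S} P γ* f‖` (valued in `ℝ≥0∞`).
For a finite set `A` this agrees with the quantity `ρ(A)` of the paper, since `ρ`
is increasing with respect to inclusion. -/
def rho (P : Γ → X →L[ℝ] X) (A : Set Γ) : ℝ≥0∞ :=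
  ⨆ (S : Finset Γ) (_ : ↑S ⊆ A) (f : StrongDual ℝ X)
    (_ : ∀ γ ∈ S, ‖Pstar P γ f‖ ≤ 1), ENNReal.ofReal ‖∑ γ ∈ S, Pstar P γ f‖

/-- `theta P f = ∑_{k=1}^∞ q_k(f) ρ(G_k(f))`, valued in `ℝ≥0∞`. -/
def theta (P : Γ → X →L[ℝ] X) (f : StrongDual ℝ X) : ℝ≥0∞ :=
  ∑' k : ℕ, ENNReal.ofReal (qfun P f (k + 1)) * rho P (Gset P f (k + 1))

end


lemma exists_unit_component {X : Type*} [NormedAddCommGroup X] [NormedSpace ℝ X] {Γ : Type*}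
    (P : Γ → X →L[ℝ] X) (hproj : ∀ γ, (P γ).comp (P γ) = P γ)
    (hne : ∀ γ, P γ ≠ 0) (γ : Γ) :
    ∃ g : StrongDual ℝ X, g.comp (P γ) = g ∧ ‖g‖ = 1 := by
  obtain ⟨x, hx⟩ : ∃ x, P γ x ≠ 0 := by
    by_contra hc; push_neg at hc
    exact hne γ (ContinuousLinearMap.ext fun x => by simp [hc x])
  obtain ⟨h, hh1, hh2⟩ := exists_dual_vector ℝ (P γ x) (norm_ne_zero_iff.mpr hx)
  set g0 : StrongDual ℝ X := h.comp (P γ) with hg0def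
  have hg0 : g0 ≠ 0 := by
    intro hz
    have h1 : g0 x = 0 := by rw [hz]; rfl
    have h2 : g0 x = ‖P γ x‖ := by
      have : h (P γ x) = ‖P γ x‖ := by exact_mod_cast hh2
      simpa [g0] using this
    rw [h1] at h2
    exact hx (norm_eq_zero.mp h2.symm)
  refine ⟨‖g0‖⁻¹ • g0, ?_, ?_⟩
  · rw [ContinuousLinearMap.smul_comp]
    congr 1
    rw [hg0def, ContinuousLinearMap.comp_assoc, hproj]
  · rw [norm_smul, norm_inv, norm_norm]
    exact inv_mul_cancel₀ (norm_ne_zero_iff.mpr hg0)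

lemma finite_supp {X : Type*} [NormedAddCommGroup X] [NormedSpace ℝ X] {Γ : Type*}
    (P : Γ → X →L[ℝ] X) (hdisj : ∀ α β, α ≠ β → (P α).comp (P β) = 0)
    (h : StrongDual ℝ X)
    (hh : h ∈ Submodule.span ℝ
      (⋃ γ, Set.range (fun f : StrongDual ℝ X => f.comp (P γ)))) :
    {β | h.comp (P β) ≠ 0}.Finite := by
  induction hh using Submodule.span_induction with
  | mem x hx =>
    simp only [Set.mem_iUnion, Set.mem_range] at hx
    obtain ⟨γ, f, rfl⟩ := hx
    refine (Set.finite_singleton γ).subset ?_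
    intro β hβ
    by_contra hβγ
    simp only [Set.mem_singleton_iff] at hβγ
    exact hβ (by rw [ContinuousLinearMap.comp_assoc, hdisj γ β (fun e => hβγ e.symm),
      ContinuousLinearMap.comp_zero])
  | zero => simp
  | add x y hx hy ihx ihy =>
    refine (ihx.union ihy).subset ?_
    intro β hβ
    by_contra hc
    simp only [Set.mem_union, Set.mem_setOf_eq, not_or, not_not] at hc
    exact hβ (by rw [ContinuousLinearMap.add_comp, hc.1, hc.2, add_zero])
  | smul a x hx ih =>
    refine ih.subset ?_
    intro β hβ
    by_contra hc
    simp only [Set.mem_setOf_eq, not_not] at hc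
    exact hβ (by rw [ContinuousLinearMap.smul_comp, hc, smul_zero])

lemma exists_sum_norm_gt {X : Type*} [NormedAddCommGroup X] [NormedSpace ℝ X] {Γ : Type*}
    (P : Γ → X →L[ℝ] X)
    (hdisj : ∀ α β, α ≠ β → (P α).comp (P β) = 0)
    {C : ℝ} (hC : ∀ γ, ‖P γ‖ ≤ C)
    (hspan_dual : (Submodule.span ℝ
        (⋃ γ, Set.range (fun f : StrongDual ℝ X => f.comp (P γ)))).topologicalClosure = ⊤)
    (γ : ℕ → Γ) (hγ : Function.Injective γ) (g : ℕ → StrongDual ℝ X)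
    (hg1 : ∀ i, (g i).comp (P (γ i)) = g i) (hg2 : ∀ i, ‖g i‖ = 1)
    (M : ℝ) : ∃ n, M < ‖∑ i ∈ Finset.range n, g i‖ := by
  by_contra hcon
  push_neg at hcon
  have hC0 : 0 ≤ C := le_trans (norm_nonneg (P (γ 0))) (hC (γ 0))
  -- components of the partial sums
  have hcomp0 : ∀ i j, i ≠ j → (g i).comp (P (γ j)) = 0 := by
    intro i j hij
    rw [← hg1 i, ContinuousLinearMap.comp_assoc, hdisj _ _ (fun e => hij (hγ e)),
      ContinuousLinearMap.comp_zero]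
  have hsumcomp : ∀ n i, i < n →
      (∑ j ∈ Finset.range n, g j).comp (P (γ i)) = g i := by
    intro n i hin
    rw [ContinuousLinearMap.finset_sum_comp]
    rw [Finset.sum_eq_single i (fun j _ hji => hcomp0 j i hji)
      (fun hni => absurd (Finset.mem_range.mpr hin) hni)]
    exact hg1 i
  -- weak* cluster point
  set u : ℕ → WeakDual ℝ X := fun n => StrongDual.toWeakDual (∑ i ∈ Finset.range n, g i) with hu
  have hmem : ∀ n, u n ∈ WeakDual.toStrongDual ⁻¹' Metric.closedBall 0 M := by
    intro n
    simp only [Set.mem_preimage, Metric.mem_closedBall, dist_zero_right]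
    exact hcon n
  have hle : ∀ᶠ n in atTop, u n ∈ WeakDual.toStrongDual ⁻¹' Metric.closedBall 0 M :=
    Eventually.of_forall hmem
  obtain ⟨flim, -, hcl⟩ := (WeakDual.isCompact_closedBall (𝕜 := ℝ) (0 : StrongDual ℝ X) M).exists_mapClusterPt
      (f := atTop) (u := u) (le_principal_iff.mpr hle)
  -- the continuous maps φ i
  have hfix : ∀ i, (WeakDual.toStrongDual flim).comp (P (γ i)) = g i := by
    intro i
    set φ : WeakDual ℝ X → WeakDual ℝ X :=
      fun f => StrongDual.toWeakDual ((WeakDual.toStrongDual f).comp (P (γ i))) with hφ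
    have hφcont : Continuous φ := by
      apply WeakDual.continuous_of_continuous_eval
      intro x
      exact WeakDual.eval_continuous (P (γ i) x)
    have hclφ : MapClusterPt (φ flim) atTop (φ ∘ u) :=
      hcl.continuousAt_comp hφcont.continuousAt
    have heq : (φ ∘ u) =ᶠ[atTop] fun _ => StrongDual.toWeakDual (g i) := by
      filter_upwards [eventually_ge_atTop (i + 1)] with n hn
      show StrongDual.toWeakDual ((∑ j ∈ Finset.range n, g j).comp (P (γ i))) = _
      rw [hsumcomp n i hn]
    have htend : Tendsto (φ ∘ u) atTop (𝓝 (StrongDual.toWeakDual (g i))) :=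
      Tendsto.congr' heq.symm tendsto_const_nhds
    have : φ flim = StrongDual.toWeakDual (g i) := by
      have hne : (𝓝 (φ flim) ⊓ 𝓝 (StrongDual.toWeakDual (g i))).NeBot :=
        hclφ.clusterPt.mono htend
      exact eq_of_nhds_neBot hne
    simpa [φ] using this
  -- density contradiction
  have hmemcl : (WeakDual.toStrongDual flim) ∈ closure (Submodule.span ℝ
      (⋃ γ, Set.range (fun f : StrongDual ℝ X => f.comp (P γ))) : Set (StrongDual ℝ X)) := by
    rw [← Submodule.topologicalClosure_coe, hspan_dual]
    trivial
  obtain ⟨h, hhmem, hhdist⟩ := Metric.mem_closure_iff.mp hmemcl ((C + 1)⁻¹)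
    (by positivity)
  have hfin : {β | h.comp (P β) ≠ 0}.Finite := finite_supp P hdisj h hhmem
  have hfin2 : {i : ℕ | γ i ∈ {β | h.comp (P β) ≠ 0}}.Finite :=
    Set.Finite.preimage hγ.injOn hfin
  obtain ⟨i, hi⟩ := (Set.Finite.infinite_compl hfin2).nonempty
  simp only [Set.mem_compl_iff, Set.mem_setOf_eq, not_not] at hi
  have hkey : g i = ((WeakDual.toStrongDual flim) - h).comp (P (γ i)) := by
    rw [ContinuousLinearMap.sub_comp, hfix i, hi, sub_zero]
  have hlt : ‖g i‖ < 1 := by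
    rw [hkey]
    calc ‖((WeakDual.toStrongDual flim) - h).comp (P (γ i))‖
        ≤ ‖(WeakDual.toStrongDual flim) - h‖ * ‖P (γ i)‖ := ContinuousLinearMap.opNorm_comp_le _ _
      _ ≤ ‖(WeakDual.toStrongDual flim) - h‖ * C := by
          apply mul_le_mul_of_nonneg_left (hC _) (norm_nonneg _)
      _ ≤ (C + 1)⁻¹ * C := by
          have hd : ‖(WeakDual.toStrongDual flim) - h‖ ≤ (C + 1)⁻¹ := by
            rw [← dist_eq_norm]; exact hhdist.le
          exact mul_le_mul_of_nonneg_right hd hC0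
      _ < (C + 1)⁻¹ * C + (C+1)⁻¹ := by
          have := inv_pos.mpr (by linarith : (0:ℝ) < C+1)
          linarith
      _ = 1 := by field_simp
  rw [hg2 i] at hlt
  exact lt_irrefl _ hlt

/-- If `(F^α)` is a net of finite subsets of `Γ` whose lower limit
`⋃_α ⋂_{β ≥ α} F^β` is infinite, then `ρ(F^α) → ∞`.  Here `X` carries a system of
non-zero, pairwise disjoint, uniformly bounded projections whose ranges densely span `X`
and whose adjoint ranges densely span `X*`. -/
theorem rho_tendsto_top_of_liminf_infinite
    {X : Type*} [NormedAddCommGroup X] [NormedSpace ℝ X] [CompleteSpace X]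
    {Γ : Type*} (P : Γ → X →L[ℝ] X)
    (hproj : ∀ γ, (P γ).comp (P γ) = P γ)
    (hne : ∀ γ, P γ ≠ 0)
    (hdisj : ∀ α β, α ≠ β → (P α).comp (P β) = 0)
    (hbdd : ∃ C : ℝ, ∀ γ, ‖P γ‖ ≤ C)
    (hspanX : (Submodule.span ℝ (⋃ γ, Set.range (P γ))).topologicalClosure = ⊤)
    (hspan_dual : (Submodule.span ℝ
        (⋃ γ, Set.range (fun f : StrongDual ℝ X => f.comp (P γ)))).topologicalClosure = ⊤)
    {ι : Type*} [Preorder ι] [Nonempty ι] [IsDirected ι (· ≤ ·)]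
    (F : ι → Finset Γ)
    (hinf : (⋃ α : ι, ⋂ (β : ι) (_ : α ≤ β), (F β : Set Γ)).Infinite) :
    Tendsto (fun α : ι => rho P (F α : Set Γ)) atTop (nhds ⊤) := by
  classical
  obtain ⟨C, hC⟩ := hbdd
  -- an injective sequence in the lower limit
  set L : Set Γ := ⋃ α : ι, ⋂ (β : ι) (_ : α ≤ β), (F β : Set Γ) with hL
  let e := hinf.natEmbedding
  set γ : ℕ → Γ := fun i => (e i : Γ) with hγdef
  have hγinj : Function.Injective γ := fun i j hij => e.injective (Subtype.ext hij)
  have hγL : ∀ i, γ i ∈ L := fun i => (e i).2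
  -- unit components
  choose g hg1 hg2 using fun i => exists_unit_component P hproj hne (γ i)
  -- indices where the sequence eventually lives
  have hγF : ∀ i, ∃ α : ι, ∀ β, α ≤ β → γ i ∈ F β := by
    intro i
    have := hγL i
    rw [hL] at this
    simpa [Set.mem_iUnion, Set.mem_iInter] using this
  choose A hA using hγF
  -- the components of partial sums
  have hsumcomp : ∀ n i, i < n →
      (∑ j ∈ Finset.range n, g j).comp (P (γ i)) = g i := by
    intro n i hin
    rw [ContinuousLinearMap.finset_sum_comp]
    rw [Finset.sum_eq_single i
      (fun j _ hji => by
        rw [← hg1 j, ContinuousLinearMap.comp_assoc, hdisj _ _ (fun hh => hji (hγinj hh)),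
          ContinuousLinearMap.comp_zero])
      (fun hni => absurd (Finset.mem_range.mpr hin) hni)]
    exact hg1 i
  rw [ENNReal.tendsto_nhds_top_iff_nnreal]
  intro M
  obtain ⟨n, hn⟩ := exists_sum_norm_gt P hdisj hC hspan_dual γ hγinj g hg1 hg2 (M : ℝ)
  set S : Finset Γ := (Finset.range n).image γ with hS
  obtain ⟨α₀, hα₀⟩ := Finset.exists_le ((Finset.range n).image A)
  filter_upwards [eventually_ge_atTop α₀] with β hβ
  have hSsub : ↑S ⊆ (F β : Set Γ) := by
    intro b hb
    simp only [hS, Finset.coe_image, Set.mem_image, Finset.mem_coe, Finset.mem_range] at hb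
    obtain ⟨i, hi, rfl⟩ := hb
    exact hA i β (le_trans (hα₀ (A i) (Finset.mem_image_of_mem A (Finset.mem_range.mpr hi))) hβ)
  set f : StrongDual ℝ X := ∑ j ∈ Finset.range n, g j with hf
  have hbound : ∀ b ∈ S, ‖Pstar P b f‖ ≤ 1 := by
    intro b hb
    simp only [hS, Finset.mem_image, Finset.mem_range] at hb
    obtain ⟨i, hi, rfl⟩ := hb
    show ‖f.comp (P (γ i))‖ ≤ 1
    rw [hf, hsumcomp n i hi, hg2 i]
  have hsum : ∑ b ∈ S, Pstar P b f = f := by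
    rw [hS, Finset.sum_image (fun i _ j _ hij => hγinj hij)]
    rw [hf]
    apply Finset.sum_congr rfl
    intro i hi
    exact hsumcomp n i (Finset.mem_range.mp hi)
  calc (M : ℝ≥0∞) < ENNReal.ofReal ‖∑ b ∈ S, Pstar P b f‖ := by
        rw [hsum]
        refine (ENNReal.lt_ofReal_iff_toReal_lt ENNReal.coe_ne_top).mpr ?_
        simpa using hn
    _ ≤ rho P (F β : Set Γ) := by
        refine le_iSup_of_le S (le_iSup_of_le hSsub (le_iSup_of_le f (le_iSup_of_le hbound le_rfl)))
end

section
/- Let $X$ be a Banach space with a system of projections $(P_\gamma)_{\gamma\in\Gamma}$ as above, and define for $f\in X^*$: $p_k(f)$ the $k$-th largest element of $\{\|P_\gamma^* f\| : P_\gamma^* f \neq 0\}$ (or $0$ if there are fewer than $k$ distinct values), $q_k(f) = p_k(f)-p_{k+1}(f)$, $G_k(f) = \{\gamma : \|P_\gamma^* f\| \ge p_k(f), P_\gamma^* f \neq 0\}$, and $\theta(f) = \sum_{k=1}^\infty q_k(f)\rho(G_k(f))$. Then $\theta$ is weak*-lower semicontinuous on $X^*$. -/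
open Filter
open scoped ENNReal NNReal

noncomputable section Aux

variable {X : Type*} [NormedAddCommGroup X] [NormedSpace ℝ X] {Γ : Type*}
  (P : Γ → X →L[ℝ] X) (f : StrongDual ℝ X)

lemma ranSet_nonneg : ∀ r ∈ ranSet P f, 0 ≤ r := by
  rintro r ⟨γ, -, rfl⟩; exact norm_nonneg _

lemma bddAbove_ranSet {C : ℝ} (hC : ∀ γ, ‖P γ‖ ≤ C) : BddAbove (ranSet P f) := by
  refine ⟨‖f‖ * C, ?_⟩
  rintro r ⟨γ, -, rfl⟩
  calc ‖Pstar P γ f‖ ≤ ‖f‖ * ‖P γ‖ := ContinuousLinearMap.opNorm_comp_le _ _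
    _ ≤ ‖f‖ * C := by have := norm_nonneg f; nlinarith [hC γ, norm_nonneg (P γ)]

lemma pfun_nonneg : ∀ k, 0 ≤ pfun P f k
  | 0 => le_refl _
  | 1 => Real.sSup_nonneg (ranSet_nonneg P f)
  | (k + 2) => Real.sSup_nonneg (fun r hr => ranSet_nonneg P f r hr.1)

lemma pfun_succ_le (k : ℕ) : pfun P f (k + 2) ≤ pfun P f (k + 1) := by
  show sSup _ ≤ _
  by_cases hT : {r | r ∈ ranSet P f ∧ r < pfun P f (k + 1)}.Nonempty
  · exact csSup_le hT fun r hr => hr.2.le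
  · rw [Set.not_nonempty_iff_eq_empty] at hT
    rw [hT, Real.sSup_empty]
    exact pfun_nonneg P f _

lemma pfun_anti {k l : ℕ} (h : k ≤ l) : pfun P f (l + 1) ≤ pfun P f (k + 1) := by
  induction l with
  | zero => interval_cases k; exact le_refl _
  | succ l ih =>
    rcases Nat.le_succ_iff.mp h with h' | h'
    · exact (pfun_succ_le P f l).trans (ih h')
    · subst h'; exact le_refl _

lemma le_pfun_one (hb : BddAbove (ranSet P f)) {r : ℝ} (hr : r ∈ ranSet P f) :
    r ≤ pfun P f 1 := le_csSup hb hr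

/-- key gap property: any value above `p_{k+2}` must be at least `p_{k+1}`. -/
lemma pfun_le_of_lt (hb : BddAbove (ranSet P f)) (k : ℕ) {s r : ℝ}
    (hs : pfun P f (k + 2) ≤ s) (hr : r ∈ ranSet P f) (hsr : s < r) :
    pfun P f (k + 1) ≤ r := by
  by_contra hcon
  push_neg at hcon
  have hmem : r ∈ {r | r ∈ ranSet P f ∧ r < pfun P f (k + 1)} := ⟨hr, hcon⟩
  have : r ≤ pfun P f (k + 2) :=
    le_csSup (hb.mono (fun x hx => hx.1)) hmem
  linarith

lemma rho_mono {A B : Set Γ} (h : A ⊆ B) : rho P A ≤ rho P B := by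
  refine iSup_mono fun S => ?_
  exact iSup_le fun hS => le_iSup_of_le (hS.trans h) le_rfl

lemma le_rho {A : Set Γ} {S : Finset Γ} (hS : ↑S ⊆ A) {g : StrongDual ℝ X}
    (hg : ∀ γ ∈ S, ‖Pstar P γ g‖ ≤ 1) :
    ENNReal.ofReal ‖∑ γ ∈ S, Pstar P γ g‖ ≤ rho P A :=
  le_iSup_of_le S (le_iSup_of_le hS (le_iSup_of_le g (le_iSup_of_le hg le_rfl)))

lemma rho_empty : rho P (∅ : Set Γ) = 0 := by
  refine le_antisymm ?_ (zero_le)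
  refine iSup_le fun S => iSup_le fun hS => iSup_le fun g => iSup_le fun hg => ?_
  have : S = ∅ := Finset.coe_eq_empty.mp (Set.subset_empty_iff.mp hS)
  subst this
  simp

open scoped Classical in
lemma rho_eq_iSup (A : Set Γ) :
    rho P A = ⨆ p : Finset Γ × StrongDual ℝ X,
      if (↑p.1 ⊆ A ∧ ∀ γ ∈ p.1, ‖Pstar P γ p.2‖ ≤ 1) then
        ENNReal.ofReal ‖∑ γ ∈ p.1, Pstar P γ p.2‖ else 0 := by
  refine le_antisymm ?_ ?_
  · refine iSup_le fun S => iSup_le fun hS => iSup_le fun g => iSup_le fun hg => ?_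
    refine le_iSup_of_le (S, g) ?_
    rw [if_pos ⟨hS, hg⟩]
  · refine iSup_le fun p => ?_
    split_ifs with hc
    · exact le_rho P hc.1 hc.2
    · exact zero_le

/-- Components of `f` of norm `≥ ε` form a finite set. -/
lemma finite_large_components
    (hdisj : ∀ α β, α ≠ β → (P α).comp (P β) = 0) {C : ℝ} (hC : ∀ γ, ‖P γ‖ ≤ C)
    (hspan_dual : (Submodule.span ℝ
        (⋃ γ, Set.range (fun f : StrongDual ℝ X => f.comp (P γ)))).topologicalClosure = ⊤)
    {ε : ℝ} (hε : 0 < ε) : {γ | ε ≤ ‖Pstar P γ f‖}.Finite := by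
  set C' := max C 1 with hC'def
  have hC' : ∀ γ, ‖P γ‖ ≤ C' := fun γ => (hC γ).trans (le_max_left _ _)
  have hC'pos : (0:ℝ) < C' := lt_of_lt_of_le one_pos (le_max_right _ _)
  have hdense : Dense ((Submodule.span ℝ
      (⋃ γ, Set.range (fun f : StrongDual ℝ X => f.comp (P γ)))) : Set (StrongDual ℝ X)) :=
    Submodule.dense_iff_topologicalClosure_eq_top.mpr hspan_dual
  obtain ⟨g, hgmem, hgdist⟩ := hdense.exists_dist_lt f (div_pos hε hC'pos)
  have hsupp : {γ | Pstar P γ g ≠ 0}.Finite := by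
    refine Submodule.span_induction (p := fun x _ => {γ | Pstar P γ x ≠ 0}.Finite)
      ?_ ?_ ?_ ?_ hgmem
    · rintro x hx
      simp only [Set.mem_iUnion, Set.mem_range] at hx
      obtain ⟨α, h, rfl⟩ := hx
      refine (Set.finite_singleton α).subset ?_
      intro γ hγ
      simp only [Set.mem_setOf_eq] at hγ
      by_contra hne
      apply hγ
      show (h.comp (P α)).comp (P γ) = 0
      rw [ContinuousLinearMap.comp_assoc, hdisj α γ (Ne.symm hne)]
      ext x; simp
    · refine Set.Finite.subset (Set.finite_empty) ?_
      intro γ hγ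
      exact absurd rfl hγ
    · intro x y _ _ hx hy
      refine (hx.union hy).subset ?_
      intro γ hγ
      simp only [Set.mem_setOf_eq, Set.mem_union] at *
      by_contra hcon
      push_neg at hcon
      apply hγ
      show (x + y).comp (P γ) = 0
      rw [ContinuousLinearMap.add_comp]
      rw [show x.comp (P γ) = 0 from hcon.1, show y.comp (P γ) = 0 from hcon.2, add_zero]
    · intro a x _ hx
      refine hx.subset ?_
      intro γ hγ
      simp only [Set.mem_setOf_eq] at *
      by_contra hcon
      apply hγ
      show (a • x).comp (P γ) = 0
      rw [ContinuousLinearMap.smul_comp, show x.comp (P γ) = 0 from hcon, smul_zero]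
  refine hsupp.subset ?_
  intro γ hγ
  simp only [Set.mem_setOf_eq] at *
  intro hzero
  have h1 : Pstar P γ f = Pstar P γ (f - g) := by
    show f.comp (P γ) = (f - g).comp (P γ)
    rw [ContinuousLinearMap.sub_comp, show g.comp (P γ) = 0 from hzero, sub_zero]
  have h2 : ‖Pstar P γ (f - g)‖ ≤ C' * ‖f - g‖ := by
    calc ‖Pstar P γ (f - g)‖ ≤ ‖f - g‖ * ‖P γ‖ := ContinuousLinearMap.opNorm_comp_le _ _
      _ ≤ ‖f - g‖ * C' := by nlinarith [hC' γ, norm_nonneg (f - g), norm_nonneg (P γ)]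
      _ = C' * ‖f - g‖ := mul_comm _ _
  rw [dist_eq_norm] at hgdist
  have : ‖Pstar P γ f‖ < ε := by
    rw [h1]
    calc ‖Pstar P γ (f - g)‖ ≤ C' * ‖f - g‖ := h2
      _ < C' * (ε / C') := by exact (mul_lt_mul_iff_right₀ hC'pos).mpr hgdist
      _ = ε := by field_simp
  linarith

/-- If `sSup T > s > 0` for `T ⊆ ranSet` then `sSup T ∈ T` (using finiteness above `s`). -/
lemma exists_pfun_le (hb : BddAbove (ranSet P f))
    (hfin : ∀ ε, 0 < ε → {γ | ε ≤ ‖Pstar P γ f‖}.Finite)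
    {s : ℝ} (hs : 0 < s) : ∃ k, pfun P f (k + 1) ≤ s := by
  by_contra hcon
  push_neg at hcon
  have hFs : {r | r ∈ ranSet P f ∧ s < r}.Finite := by
    refine Set.Finite.subset ((hfin s hs).image (fun γ => ‖Pstar P γ f‖)) ?_
    rintro r ⟨⟨γ, hγ, rfl⟩, hr⟩
    exact ⟨γ, le_of_lt hr, rfl⟩
  -- helper: sSup of subsets with sup > s is attained
  have helper : ∀ T : Set ℝ, T ⊆ ranSet P f → s < sSup T → sSup T ∈ T := by
    intro T hT hsT
    have hTne : T.Nonempty := by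
      by_contra hne
      rw [Set.not_nonempty_iff_eq_empty] at hne
      rw [hne, Real.sSup_empty] at hsT
      linarith
    have hbT : BddAbove T := hb.mono hT
    obtain ⟨r0, hr0T, hr0⟩ := exists_lt_of_lt_csSup hTne hsT
    set T' := {r | r ∈ T ∧ s < r} with hT'def
    have hT'fin : T'.Finite := hFs.subset (by rintro r ⟨h1, h2⟩; exact ⟨hT h1, h2⟩)
    have hT'ne : hT'fin.toFinset.Nonempty := by
      rw [Set.Finite.toFinset_nonempty]; exact ⟨r0, hr0T, hr0⟩
    set m := hT'fin.toFinset.max' hT'ne with hmdef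
    have hmT' : m ∈ T' := by
      have := hT'fin.toFinset.max'_mem hT'ne
      rwa [Set.Finite.mem_toFinset] at this
    have hsup : sSup T = m := by
      refine le_antisymm ?_ (le_csSup hbT hmT'.1)
      refine csSup_le hTne fun r hr => ?_
      by_cases hrs : s < r
      · exact hT'fin.toFinset.le_max' r (by rw [Set.Finite.mem_toFinset]; exact ⟨hr, hrs⟩)
      · push_neg at hrs
        exact hrs.trans (le_of_lt hmT'.2)
    rw [hsup]; exact hmT'.1
  -- each pfun (k+1) lies in ranSet, and the sequence is strictly decreasing
  have hmem : ∀ k, pfun P f (k + 1) ∈ ranSet P f := by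
    intro k
    cases k with
    | zero => exact helper _ (fun r hr => hr) (hcon 0)
    | succ k =>
      have := helper {r | r ∈ ranSet P f ∧ r < pfun P f (k + 1)} (fun r hr => hr.1)
        (hcon (k + 1))
      exact this.1
  have hstrict : ∀ k, pfun P f (k + 2) < pfun P f (k + 1) := by
    intro k
    have := helper {r | r ∈ ranSet P f ∧ r < pfun P f (k + 1)} (fun r hr => hr.1)
      (hcon (k + 1))
    exact this.2
  set e : ℕ → ℝ := fun k => pfun P f (k + 1) with hedef
  have he : StrictAnti e := strictAnti_nat_of_succ_lt fun n => hstrict n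
  have hrange : Set.range e ⊆ {r | r ∈ ranSet P f ∧ s < r} := by
    rintro r ⟨k, rfl⟩
    exact ⟨hmem k, hcon k⟩
  exact (Set.infinite_range_of_injective he.injective) (hFs.subset hrange)

open MeasureTheory in
/-- Soundness: lower Riemann sums against levels `t` bound `theta` from below. -/
lemma sum_le_theta (hb : BddAbove (ranSet P f))
    (hfin : ∀ ε, 0 < ε → {γ | ε ≤ ‖Pstar P γ f‖}.Finite)
    (n : ℕ) (S : ℕ → Finset Γ) (t : ℕ → ℝ) (g : ℕ → StrongDual ℝ X)
    (ht : Antitone t) (ht0 : ∀ k, 0 ≤ t k)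
    (hg1 : ∀ k, ∀ γ ∈ S k, ‖Pstar P γ (g k)‖ ≤ 1)
    (hSf : ∀ k < n, ∀ γ ∈ S k, t k < ‖Pstar P γ f‖) :
    ∑ k ∈ Finset.range n,
        ENNReal.ofReal (t k - t (k + 1)) * ENNReal.ofReal ‖∑ γ ∈ S k, Pstar P γ (g k)‖
      ≤ theta P f := by
  set h : ℝ → ℝ≥0∞ := fun s => rho P {γ | Pstar P γ f ≠ 0 ∧ s < ‖Pstar P γ f‖} with hhdef
  have hanti : ∀ a b : ℝ, a ≤ b → h b ≤ h a := fun a b hab =>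
    rho_mono P (fun γ hγ => ⟨hγ.1, lt_of_le_of_lt hab hγ.2⟩)
  -- Step A : the sum is at most ∫⁻ over Ioc (t n) (t 0)
  have stepA : ∀ m : ℕ, m ≤ n →
      ∑ k ∈ Finset.range m,
          ENNReal.ofReal (t k - t (k + 1)) * ENNReal.ofReal ‖∑ γ ∈ S k, Pstar P γ (g k)‖
        ≤ ∫⁻ s in Set.Ioc (t m) (t 0), h s := by
    intro m hm
    induction m with
    | zero => simp
    | succ m ih =>
      rw [Finset.sum_range_succ]
      have hterm : ENNReal.ofReal (t m - t (m + 1)) * ENNReal.ofReal ‖∑ γ ∈ S m, Pstar P γ (g m)‖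
          ≤ ∫⁻ s in Set.Ioc (t (m + 1)) (t m), h s := by
        have hle : ENNReal.ofReal ‖∑ γ ∈ S m, Pstar P γ (g m)‖ ≤ h (t m) := by
          refine le_rho P ?_ (hg1 m)
          intro γ hγ
          have := hSf m hm γ hγ
          exact ⟨by
            intro hz
            rw [hz, norm_zero] at this
            exact absurd this (not_lt.mpr (ht0 m)), this⟩
        calc ENNReal.ofReal (t m - t (m + 1)) * ENNReal.ofReal ‖∑ γ ∈ S m, Pstar P γ (g m)‖
            ≤ ENNReal.ofReal (t m - t (m + 1)) * h (t m) := by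
              exact mul_le_mul_right hle _
          _ = ∫⁻ _ in Set.Ioc (t (m + 1)) (t m), h (t m) := by
              rw [setLIntegral_const, Real.volume_Ioc, mul_comm]
          _ ≤ ∫⁻ s in Set.Ioc (t (m + 1)) (t m), h s := by
              refine setLIntegral_mono' measurableSet_Ioc fun s hs => ?_
              exact hanti _ _ hs.2
      calc _ ≤ (∫⁻ s in Set.Ioc (t m) (t 0), h s) + ∫⁻ s in Set.Ioc (t (m + 1)) (t m), h s :=
            add_le_add (ih (le_trans (Nat.le_succ m) hm)) hterm
        _ = ∫⁻ s in Set.Ioc (t (m + 1)) (t 0), h s := by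
            rw [add_comm, ← lintegral_union measurableSet_Ioc (Set.Ioc_disjoint_Ioc_of_le le_rfl),
              Set.Ioc_union_Ioc_eq_Ioc (ht (Nat.le_succ m)) (ht (Nat.zero_le m))]
  -- Step C : ∫⁻ over Ioi 0 is at most theta
  have stepC : (∫⁻ s in Set.Ioi (0:ℝ), h s) ≤ theta P f := by
    set A : ℕ → Set ℝ := fun k => Nat.casesOn k (Set.Ici (pfun P f 1))
      (fun j => Set.Ico (pfun P f (j + 2)) (pfun P f (j + 1))) with hAdef
    have hcov : Set.Ioi (0:ℝ) ⊆ ⋃ k, A k := by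
      intro s hs
      simp only [Set.mem_Ioi] at hs
      by_cases h1 : pfun P f 1 ≤ s
      · exact Set.mem_iUnion.mpr ⟨0, h1⟩
      · push_neg at h1
        have hex : ∃ k, pfun P f (k + 1) ≤ s := exists_pfun_le P f hb hfin hs
        have hm0 : Nat.find hex ≠ 0 := by
          intro hz
          have hsp := Nat.find_spec hex
          rw [hz] at hsp
          exact absurd hsp (not_le.mpr h1)
        obtain ⟨j, hj⟩ := Nat.exists_eq_succ_of_ne_zero hm0
        have hspec := Nat.find_spec hex
        rw [hj] at hspec
        have hlt : s < pfun P f (j + 1) := by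
          by_contra hcon
          push_neg at hcon
          exact Nat.find_min hex (by omega) hcon
        exact Set.mem_iUnion.mpr ⟨j + 1, ⟨hspec, hlt⟩⟩
    calc (∫⁻ s in Set.Ioi (0:ℝ), h s) ≤ ∫⁻ s in ⋃ k, A k, h s := lintegral_mono_set hcov
      _ ≤ ∑' k, ∫⁻ s in A k, h s := lintegral_iUnion_le _ _
      _ ≤ theta P f := by
          have hA0 : (∫⁻ s in A 0, h s) = 0 := by
            refine le_antisymm ?_ (zero_le)
            have : ∀ s ∈ A 0, h s = 0 := by
              intro s hs
              have hset : {γ | Pstar P γ f ≠ 0 ∧ s < ‖Pstar P γ f‖} = ∅ := by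
                rw [Set.eq_empty_iff_forall_notMem]
                rintro γ ⟨hγ, hγ2⟩
                have : ‖Pstar P γ f‖ ≤ pfun P f 1 := le_pfun_one P f hb ⟨γ, hγ, rfl⟩
                have hs' : pfun P f 1 ≤ s := hs
                linarith
              show rho P _ = 0
              rw [hset, rho_empty]
            calc (∫⁻ s in A 0, h s) ≤ ∫⁻ _ in A 0, (0:ℝ≥0∞) :=
                setLIntegral_mono' measurableSet_Ici (fun s hs => le_of_eq (this s hs))
              _ = 0 := by simp
          have hAk : ∀ k : ℕ, (∫⁻ s in A (k + 1), h s) ≤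
              ENNReal.ofReal (qfun P f (k + 1)) * rho P (Gset P f (k + 1)) := by
            intro k
            have hbound : ∀ s ∈ A (k + 1), h s ≤ rho P (Gset P f (k + 1)) := by
              intro s hs
              obtain ⟨hs1, hs2⟩ := hs
              refine rho_mono P ?_
              rintro γ ⟨hγ, hγ2⟩
              refine ⟨hγ, ?_⟩
              exact pfun_le_of_lt P f hb k hs1 ⟨γ, hγ, rfl⟩ hγ2
            calc (∫⁻ s in A (k + 1), h s)
                ≤ ∫⁻ _ in A (k + 1), rho P (Gset P f (k + 1)) :=
                  setLIntegral_mono' measurableSet_Ico hbound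
              _ = rho P (Gset P f (k + 1)) * volume (A (k + 1)) := setLIntegral_const _ _
              _ = ENNReal.ofReal (qfun P f (k + 1)) * rho P (Gset P f (k + 1)) := by
                  show _ * volume (Set.Ico _ _) = _
                  rw [Real.volume_Ico, mul_comm]
                  rfl
          calc (∑' k, ∫⁻ s in A k, h s)
              = (∫⁻ s in A 0, h s) + ∑' k, ∫⁻ s in A (k + 1), h s := by
                rw [tsum_eq_zero_add' ENNReal.summable]
            _ = ∑' k, ∫⁻ s in A (k + 1), h s := by rw [hA0, zero_add]
            _ ≤ theta P f := ENNReal.tsum_le_tsum hAk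
  calc _ ≤ ∫⁻ s in Set.Ioc (t n) (t 0), h s := stepA n le_rfl
    _ ≤ ∫⁻ s in Set.Ioi (0:ℝ), h s := by
        refine lintegral_mono_set ?_
        intro s hs
        exact lt_of_le_of_lt (ht0 n) hs.1
    _ ≤ theta P f := stepC

lemma exists_sum_lt {ι : Type*} [Nonempty ι] (d : ℕ → ι → ℝ≥0∞) (F : Finset ℕ) {y : ℝ≥0∞}
    (h : y < ∑ k ∈ F, ⨆ j, d k j) :
    ∃ c : ℕ → ι, y < ∑ k ∈ F, d k (c k) := by
  induction F using Finset.induction_on generalizing y with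
  | empty => simp at h
  | @insert a F ha ih =>
    rw [Finset.sum_insert ha, ENNReal.iSup_add] at h
    obtain ⟨j0, hj0⟩ := lt_iSup_iff.mp h
    by_cases hy : y < d a j0
    · refine ⟨fun _ => j0, ?_⟩
      rw [Finset.sum_insert ha]
      exact lt_of_lt_of_le hy le_self_add
    · push_neg at hy
      have hyt : y ≠ ⊤ := h.ne_top
      have hdt : d a j0 ≠ ⊤ := fun ht => hyt (top_le_iff.mp (ht ▸ hy))
      have h2 : y - d a j0 < ∑ k ∈ F, ⨆ j, d k j := by
        rw [ENNReal.sub_lt_iff_lt_right hdt hy, add_comm]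
        exact hj0
      obtain ⟨c, hc⟩ := ih h2
      refine ⟨Function.update c a j0, ?_⟩
      rw [Finset.sum_insert ha, Function.update_self]
      have heq : ∑ k ∈ F, d k (Function.update c a j0 k) = ∑ k ∈ F, d k (c k) :=
        Finset.sum_congr rfl fun k hk => by
          rw [Function.update_of_ne (by rintro rfl; exact ha hk)]
      rw [heq, add_comm]
      rw [ENNReal.sub_lt_iff_lt_right hdt hy] at hc
      exact hc

lemma ofReal_sum_le (F : Finset ℕ) (v : ℕ → ℝ) :
    ENNReal.ofReal (∑ k ∈ F, v k) ≤ ∑ k ∈ F, ENNReal.ofReal (v k) := by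
  induction F using Finset.induction_on with
  | empty => simp
  | @insert a F ha ih =>
    rw [Finset.sum_insert ha, Finset.sum_insert ha]
    exact le_trans ENNReal.ofReal_add_le (add_le_add le_rfl ih)

lemma ofReal_mul_le' {a v : ℝ} (hv : 0 ≤ v) :
    ENNReal.ofReal (a * v) ≤ ENNReal.ofReal a * ENNReal.ofReal v := by
  by_cases ha : 0 ≤ a
  · rw [ENNReal.ofReal_mul ha]
  · push_neg at ha
    have h0 : a * v ≤ 0 := mul_nonpos_iff.mpr (Or.inr ⟨ha.le, hv⟩)
    rw [ENNReal.ofReal_eq_zero.mpr h0]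
    exact zero_le

lemma isOpen_pstar_gt (γ : Γ) {c : ℝ} (hc : 0 ≤ c) :
    IsOpen {g : WeakDual ℝ X | c < ‖Pstar P γ (WeakDual.toStrongDual g)‖} := by
  have hset : {g : WeakDual ℝ X | c < ‖Pstar P γ (WeakDual.toStrongDual g)‖} =
      ⋃ x : {x : X // ‖x‖ ≤ 1},
        (fun g : WeakDual ℝ X => ‖g (P γ x)‖) ⁻¹' Set.Ioi c := by
    ext g
    simp only [Set.mem_setOf_eq, Set.mem_iUnion, Set.mem_preimage, Set.mem_Ioi]
    constructor
    · intro hg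
      by_contra hcon
      push_neg at hcon
      have hb : ‖Pstar P γ (WeakDual.toStrongDual g)‖ ≤ c := by
        refine ContinuousLinearMap.opNorm_le_bound _ hc fun x => ?_
        rcases eq_or_ne x 0 with rfl | hx0
        · simp
        · have hnx : 0 < ‖x‖ := norm_pos_iff.mpr hx0
          have h1 : ‖(‖x‖:ℝ)⁻¹ • x‖ ≤ 1 := by
            rw [norm_smul, norm_inv, norm_norm, inv_mul_cancel₀ hnx.ne']
          have h2 := hcon ⟨_, h1⟩
          simp only [map_smul] at h2
          rw [norm_smul, norm_inv, norm_norm] at h2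
          have h3 : ‖g (P γ x)‖ ≤ c * ‖x‖ := by
            rw [← mul_le_mul_iff_right₀ (a := (‖x‖:ℝ)⁻¹) (by positivity)]
            calc (‖x‖:ℝ)⁻¹ * ‖g (P γ x)‖ ≤ c := h2
              _ = (‖x‖:ℝ)⁻¹ * (c * ‖x‖) := by field_simp
          exact h3
      exact absurd hg (not_lt.mpr hb)
    · rintro ⟨⟨x, hx⟩, hgx⟩
      refine lt_of_lt_of_le hgx ?_
      calc ‖g (P γ x)‖ = ‖Pstar P γ (WeakDual.toStrongDual g) x‖ := rfl
        _ ≤ ‖Pstar P γ (WeakDual.toStrongDual g)‖ * ‖x‖ := ContinuousLinearMap.le_opNorm _ _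
        _ ≤ ‖Pstar P γ (WeakDual.toStrongDual g)‖ := mul_le_of_le_one_right (norm_nonneg _) hx
  rw [hset]
  exact isOpen_iUnion fun x => isOpen_Ioi.preimage ((WeakDual.eval_continuous _).norm)

end Aux

set_option maxHeartbeats 2000000

/-- The function `θ(f) = ∑_{k≥1} q_k(f) ρ(G_k(f))` is weak*-lower semicontinuous on `X*`,
for any system of non-zero, pairwise disjoint, uniformly bounded projections whose ranges
densely span `X` and whose adjoint ranges densely span `X*`. -/
theorem theta_weakStar_lowerSemicontinuous
    {X : Type*} [NormedAddCommGroup X] [NormedSpace ℝ X] [CompleteSpace X]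
    {Γ : Type*} (P : Γ → X →L[ℝ] X)
    (hproj : ∀ γ, (P γ).comp (P γ) = P γ)
    (hne : ∀ γ, P γ ≠ 0)
    (hdisj : ∀ α β, α ≠ β → (P α).comp (P β) = 0)
    (hbdd : ∃ C : ℝ, ∀ γ, ‖P γ‖ ≤ C)
    (hspanX : (Submodule.span ℝ (⋃ γ, Set.range (P γ))).topologicalClosure = ⊤)
    (hspan_dual : (Submodule.span ℝ
        (⋃ γ, Set.range (fun f : StrongDual ℝ X => f.comp (P γ)))).topologicalClosure = ⊤) :
    LowerSemicontinuous (fun f : WeakDual ℝ X => theta P (WeakDual.toStrongDual f)) := by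
  classical
  obtain ⟨C, hC⟩ := hbdd
  intro f₀ y hy
  set fd : StrongDual ℝ X := WeakDual.toStrongDual f₀ with hfddef
  have hb : ∀ f : StrongDual ℝ X, BddAbove (ranSet P f) := fun f => bddAbove_ranSet P f hC
  have hfin : ∀ f : StrongDual ℝ X, ∀ ε, 0 < ε → {γ | ε ≤ ‖Pstar P γ f‖}.Finite :=
    fun f ε hε => finite_large_components P f hdisj hC hspan_dual hε
  have hy' : y < theta P fd := hy
  rw [theta, ENNReal.tsum_eq_iSup_sum' (fun n => Finset.range n)
    (fun t => Finset.exists_nat_subset_range t), lt_iSup_iff] at hy'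
  obtain ⟨N, hN⟩ := hy'
  set d : ℕ → Finset Γ × StrongDual ℝ X → ℝ≥0∞ := fun k p =>
    if (↑p.1 ⊆ Gset P fd (k+1) ∧ ∀ γ ∈ p.1, ‖Pstar P γ p.2‖ ≤ 1) then
      ENNReal.ofReal (qfun P fd (k+1)) * ENNReal.ofReal ‖∑ γ ∈ p.1, Pstar P γ p.2‖ else 0
    with hddef
  have hsum : y < ∑ k ∈ Finset.range N, ⨆ p, d k p := by
    refine lt_of_lt_of_le hN (le_of_eq ?_)
    refine Finset.sum_congr rfl fun k _ => ?_
    rw [rho_eq_iSup, ENNReal.mul_iSup]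
    refine iSup_congr fun p => ?_
    simp only [hddef]
    split_ifs with hcond
    · rfl
    · exact mul_zero _
  obtain ⟨c, hc⟩ := exists_sum_lt d (Finset.range N) hsum
  set c' : ℕ → Finset Γ × StrongDual ℝ X := fun k =>
    if (↑(c k).1 ⊆ Gset P fd (k+1) ∧ ∀ γ ∈ (c k).1, ‖Pstar P γ (c k).2‖ ≤ 1) then c k else (∅, 0)
    with hc'def
  set S : ℕ → Finset Γ := fun k => (c' k).1 with hSdef
  set g : ℕ → StrongDual ℝ X := fun k => (c' k).2 with hgdef
  have hcond : ∀ k, ↑(S k) ⊆ Gset P fd (k+1) ∧ ∀ γ ∈ S k, ‖Pstar P γ (g k)‖ ≤ 1 := by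
    intro k
    simp only [hSdef, hgdef, hc'def]
    split_ifs with hk
    · exact hk
    · refine ⟨by simp, by simp⟩
  set v : ℕ → ℝ := fun k => ‖∑ γ ∈ S k, Pstar P γ (g k)‖ with hvdef
  have hv0 : ∀ k, 0 ≤ v k := fun k => norm_nonneg _
  have hq0 : ∀ k, 0 ≤ qfun P fd (k + 1) := fun k => sub_nonneg.mpr (pfun_succ_le P fd k)
  have hyR : y < ∑ k ∈ Finset.range N,
      ENNReal.ofReal (qfun P fd (k+1)) * ENNReal.ofReal (v k) := by
    refine lt_of_lt_of_le hc (Finset.sum_le_sum fun k _ => ?_)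
    simp only [hddef]
    split_ifs with hk
    · have hck : c' k = c k := if_pos hk
      have : v k = ‖∑ γ ∈ (c k).1, Pstar P γ (c k).2‖ := by
        rw [hvdef]; simp only [hSdef, hgdef, hck]
      rw [this]
    · exact zero_le
  set R : ℝ := ∑ k ∈ Finset.range N, qfun P fd (k+1) * v k with hRdef
  have hyR' : y < ENNReal.ofReal R := by
    have heq : ∑ k ∈ Finset.range N, ENNReal.ofReal (qfun P fd (k+1)) * ENNReal.ofReal (v k)
        = ENNReal.ofReal R := by
      rw [hRdef, ENNReal.ofReal_sum_of_nonneg (fun k _ => mul_nonneg (hq0 k) (hv0 k))]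
      exact Finset.sum_congr rfl fun k _ => (ENNReal.ofReal_mul (hq0 k)).symm
    rwa [heq] at hyR
  have hyt : y ≠ ⊤ := hyR'.ne_top
  have hytR : y.toReal < R := (ENNReal.lt_ofReal_iff_toReal_lt hyt).mp hyR'
  set M : ℝ := (∑ k ∈ Finset.range N, ((k : ℝ) + 1) * v k) + 1 with hMdef
  have hMsum : 0 ≤ ∑ k ∈ Finset.range N, ((k : ℝ) + 1) * v k :=
    Finset.sum_nonneg fun k _ => mul_nonneg (by positivity) (hv0 k)
  have hMpos : (0:ℝ) < M := by rw [hMdef]; linarith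
  set δ : ℝ := (R - y.toReal) / (2 * M) with hδdef
  have hδpos : 0 < δ := div_pos (by linarith) (by linarith)
  set t : ℕ → ℝ := fun k => max (pfun P fd (k+1) - ((k : ℝ) + 1) * δ) 0 with htdef
  have ht0 : ∀ k, 0 ≤ t k := fun k => le_max_right _ _
  have htanti : Antitone t := by
    intro k l hkl
    have h1 : pfun P fd (l+1) ≤ pfun P fd (k+1) := pfun_anti P fd hkl
    have h2 : ((k : ℝ) + 1) * δ ≤ ((l : ℝ) + 1) * δ := by
      have : ((k : ℝ) + 1) ≤ (l : ℝ) + 1 := by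
        have : (k : ℝ) ≤ l := Nat.cast_le.mpr hkl
        linarith
      nlinarith
    exact max_le_max (by linarith) le_rfl
  set U : Set (WeakDual ℝ X) :=
    {u | ∀ k ∈ Finset.range N, ∀ γ ∈ S k, t k < ‖Pstar P γ (WeakDual.toStrongDual u)‖} with hUdef
  have hUopen : IsOpen U := by
    have hU : U = ⋂ k ∈ Finset.range N, ⋂ γ ∈ S k,
        {u : WeakDual ℝ X | t k < ‖Pstar P γ (WeakDual.toStrongDual u)‖} := by
      ext u
      simp only [hUdef, Set.mem_setOf_eq, Set.mem_iInter]
    rw [hU]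
    exact isOpen_biInter_finset fun k _ =>
      isOpen_biInter_finset fun γ _ => isOpen_pstar_gt P γ (ht0 k)
  have hf₀U : f₀ ∈ U := by
    intro k hk γ hγ
    obtain ⟨hne0, hple⟩ := (hcond k).1 hγ
    refine max_lt ?_ (norm_pos_iff.mpr hne0)
    have hpos : (0:ℝ) < ((k : ℝ) + 1) * δ := mul_pos (by positivity) hδpos
    have : ‖Pstar P γ fd‖ = ‖Pstar P γ (WeakDual.toStrongDual f₀)‖ := rfl
    linarith [hple]
  refine Filter.eventually_of_mem (hUopen.mem_nhds hf₀U) fun u hu => ?_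
  have hsound := sum_le_theta P (WeakDual.toStrongDual u) (hb _) (hfin _) N S t g htanti ht0
    (fun k => (hcond k).2) (fun k hk γ hγ => hu k (Finset.mem_range.mpr hk) γ hγ)
  refine lt_of_lt_of_le ?_ hsound
  have hterm : ∀ k ∈ Finset.range N,
      ENNReal.ofReal ((qfun P fd (k+1) - ((k : ℝ) + 1) * δ) * v k)
        ≤ ENNReal.ofReal (t k - t (k+1)) * ENNReal.ofReal (v k) := by
    intro k _
    refine le_trans (ofReal_mul_le' (hv0 k)) ?_
    refine mul_le_mul_left (ENNReal.ofReal_le_ofReal ?_) _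
    have h1 : pfun P fd (k+1) - ((k : ℝ) + 1) * δ ≤ t k := le_max_left _ _
    have h2 : t (k+1) ≤ pfun P fd (k+2) := by
      refine max_le ?_ (pfun_nonneg P fd _)
      have hpos : (0:ℝ) ≤ ((k : ℝ) + 1 + 1) * δ := mul_nonneg (by positivity) hδpos.le
      have hcast : ((k+1 : ℕ) : ℝ) + 1 = (k : ℝ) + 1 + 1 := by push_cast; ring
      rw [hcast]
      linarith
    simp only [qfun]
    linarith
  calc y < ENNReal.ofReal ((R + y.toReal) / 2) := by
        rw [ENNReal.lt_ofReal_iff_toReal_lt hyt]; linarith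
    _ ≤ ENNReal.ofReal (∑ k ∈ Finset.range N,
          (qfun P fd (k+1) - ((k : ℝ) + 1) * δ) * v k) := by
        refine ENNReal.ofReal_le_ofReal ?_
        have hsum1 : ∑ k ∈ Finset.range N, (qfun P fd (k+1) - ((k : ℝ) + 1) * δ) * v k
            = R - δ * ∑ k ∈ Finset.range N, ((k : ℝ) + 1) * v k := by
          rw [hRdef, Finset.mul_sum, ← Finset.sum_sub_distrib]
          exact Finset.sum_congr rfl fun k _ => by ring
        rw [hsum1]
        have hle : ∑ k ∈ Finset.range N, ((k : ℝ) + 1) * v k ≤ M := by rw [hMdef]; linarith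
        have h3 : δ * ∑ k ∈ Finset.range N, ((k : ℝ) + 1) * v k ≤ δ * M :=
          mul_le_mul_of_nonneg_left hle hδpos.le
        have hδM : δ * M = (R - y.toReal) / 2 := by
          rw [hδdef]; field_simp
        linarith
    _ ≤ ∑ k ∈ Finset.range N, ENNReal.ofReal ((qfun P fd (k+1) - ((k : ℝ) + 1) * δ) * v k) :=
        ofReal_sum_le _ _
    _ ≤ ∑ k ∈ Finset.range N, ENNReal.ofReal (t k - t (k+1)) * ENNReal.ofReal (v k) :=
        Finset.sum_le_sum hterm
    _ ≤ _ := le_of_eq rfl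
end

section
/- Let $X$ be a Banach space with a normalized symmetric basis $(e_\gamma)_{\gamma\in\Gamma}$ and set $\lambda(n) = \|\sum_{k=1}^n e_{\gamma_k}\|_s$ for a fixed sequence of distinct indices. If there exists a set $\Delta$ and a bounded-below bounded linear map $T: X \to c_0(\Delta)$, then the sequence $(\lambda(n))_{n=1}^\infty$ is bounded. -/
open Filter ZeroAtInfty

private lemma exists_perm_extend : ∀ (n : ℕ) (s : ℕ → ℕ),
    (∀ i j, i < n → j < n → s i = s j → i = j) →
    ∃ σ : Equiv.Perm ℕ, ∀ k, k < n → σ k = s k := by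
  intro n
  induction n with
  | zero => exact fun s _ => ⟨1, fun k hk => absurd hk (Nat.not_lt_zero k)⟩
  | succ n ih =>
    intro s hs
    obtain ⟨σ', hσ'⟩ := ih s fun i j hi hj h =>
      hs i j (hi.trans n.lt_succ_self) (hj.trans n.lt_succ_self) h
    set t := σ'⁻¹ (s n) with ht
    refine ⟨σ' * Equiv.swap n t, ?_⟩
    intro k hk
    rcases Nat.lt_succ_iff_lt_or_eq.mp hk with hk' | rfl
    · have hkt : k ≠ t := by
        intro h
        have h1 : σ' k = s n := by rw [h, ht]; exact Equiv.apply_symm_apply σ' _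
        have h2 : σ' k = s k := hσ' k hk'
        have := hs k n (hk'.trans n.lt_succ_self) n.lt_succ_self (by rw [← h2, h1])
        omega
      rw [Equiv.Perm.mul_apply, Equiv.swap_apply_of_ne_of_ne hk'.ne hkt]
      exact hσ' k hk'
    · rw [Equiv.Perm.mul_apply, Equiv.swap_apply_left, ht]
      exact Equiv.apply_symm_apply σ' _

private lemma c0_finite_gt {Δ : Type*} [TopologicalSpace Δ] [DiscreteTopology Δ]
    (f : C₀(Δ, ℝ)) {η : ℝ} (hη : 0 < η) : {δ : Δ | η < |f δ|}.Finite := by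
  have h := zero_at_infty f
  rw [cocompact_eq_cofinite] at h
  have h2 : ∀ᶠ δ in Filter.cofinite, |f δ| < η := by
    have := Metric.tendsto_nhds.mp h η hη
    simpa [Real.dist_eq] using this
  exact (Filter.eventually_cofinite.mp h2).subset fun δ hδ => not_lt.mpr hδ.le

private lemma c0_sum_apply {Δ : Type*} [TopologicalSpace Δ] {ι : Type*} (s : Finset ι)
    (f : ι → C₀(Δ, ℝ)) (δ : Δ) : (∑ i ∈ s, f i) δ = ∑ i ∈ s, f i δ := by
  classical
  induction s using Finset.cons_induction with
  | empty => simp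
  | cons i s hi ih => rw [Finset.sum_cons, Finset.sum_cons, ZeroAtInftyContinuousMap.add_apply, ih]

private lemma c0_norm_le {Δ : Type*} [TopologicalSpace Δ] (f : C₀(Δ, ℝ)) {C : ℝ} (hC : 0 ≤ C)
    (h : ∀ δ, |f δ| ≤ C) : ‖f‖ ≤ C := by
  rw [← ZeroAtInftyContinuousMap.norm_toBCF_eq_norm]
  exact (BoundedContinuousFunction.norm_le hC).mpr fun δ => by
    simpa [Real.norm_eq_abs] using h δ

private lemma c0_abs_apply_le_norm {Δ : Type*} [TopologicalSpace Δ] (f : C₀(Δ, ℝ)) (δ : Δ) :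
    |f δ| ≤ ‖f‖ := by
  rw [← ZeroAtInftyContinuousMap.norm_toBCF_eq_norm]
  simpa [Real.norm_eq_abs] using f.toBCF.norm_coe_le_norm δ

private lemma exists_close_pair {Δ : Type*} [TopologicalSpace Δ]
    (y : ℕ → C₀(Δ, ℝ)) (M : ℝ) (hM : ∀ k (δ : Δ), |y k δ| ≤ M)
    (N : ℕ) (G : Finset Δ) {η : ℝ} (hη : 0 < η) :
    ∃ p q : ℕ, N < p ∧ p < q ∧ ∀ δ ∈ G, |y p δ - y q δ| ≤ η := by
  classical
  set v : ℕ → (↥G → ℝ) := fun k δ => y k δ.1 with hv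
  have hvmem : ∀ k, v k ∈ Metric.closedBall (0 : ↥G → ℝ) (max M 0) := by
    intro k
    rw [Metric.mem_closedBall, dist_zero_right]
    refine (pi_norm_le_iff_of_nonneg (le_max_right M 0)).mpr fun δ => ?_
    exact le_trans (by simpa [Real.norm_eq_abs] using hM k δ.1) (le_max_left M 0)
  obtain ⟨L, -, φ, hφ, hLim⟩ :=
    tendsto_subseq_of_bounded Metric.isBounded_closedBall hvmem
  obtain ⟨m₀, hm₀⟩ := (Metric.tendsto_atTop.mp hLim) (η / 2) (by linarith)
  set m1 := max m₀ (N + 1) with hm1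
  refine ⟨φ m1, φ (m1 + 1), ?_, hφ (Nat.lt_succ_self m1), ?_⟩
  · have h1 : N + 1 ≤ m1 := le_max_right _ _
    have h2 : m1 ≤ φ m1 := hφ.le_apply
    omega
  · intro δ hδ
    have h1 := hm₀ m1 (le_max_left _ _)
    have h2 := hm₀ (m1 + 1) (le_trans (le_max_left _ _) (Nat.le_succ m1))
    have hd : dist (v (φ m1)) (v (φ (m1 + 1))) ≤ η := by
      have := dist_triangle_right (v (φ m1)) (v (φ (m1 + 1))) L
      simp only [Function.comp] at h1 h2
      linarith
    have h3 := dist_le_pi_dist (v (φ m1)) (v (φ (m1 + 1))) ⟨δ, hδ⟩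
    have h4 : dist (y (φ m1) δ) (y (φ (m1 + 1)) δ) ≤ η := le_trans h3 hd
    simpa [Real.dist_eq] using h4

private lemma c0_finite_gt' {Δ : Type*} [TopologicalSpace Δ] [DiscreteTopology Δ]
    (f : C₀(Δ, ℝ)) {η : ℝ} (hη : 0 < η) : {δ : Δ | η < |f δ|}.Finite := by
  have h := zero_at_infty f
  rw [cocompact_eq_cofinite] at h
  have h2 : ∀ᶠ δ in Filter.cofinite, |f δ| < η := by
    have := Metric.tendsto_nhds.mp h η hη
    simpa [Real.dist_eq] using this
  exact (Filter.eventually_cofinite.mp h2).subset fun δ hδ => not_lt.mpr hδ.le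

private lemma gliding {Δ : Type*} [TopologicalSpace Δ] [DiscreteTopology Δ]
    (y : ℕ → C₀(Δ, ℝ)) (M : ℝ) (hM0 : 0 ≤ M) (hM : ∀ k (δ : Δ), |y k δ| ≤ M) :
    ∀ n : ℕ, ∃ a b : ℕ → ℕ,
      (∀ i, i < n → a i < b i) ∧
      (∀ i j, i < j → j < n → b i < a j) ∧
      ∀ δ : Δ, |∑ i ∈ Finset.range n, (y (a i) δ - y (b i) δ)| ≤ 2 * M + 1 := by
  have main : ∀ n : ℕ, ∃ a b : ℕ → ℕ,
      (∀ i, i < n → a i < b i) ∧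
      (∀ i j, i < j → j < n → b i < a j) ∧
      ∃ G : Finset Δ,
        (∀ δ : Δ, δ ∉ G →
          |∑ i ∈ Finset.range n, (y (a i) δ - y (b i) δ)| ≤ 1 - (1/2 : ℝ) ^ n) ∧
        (∀ δ : Δ,
          |∑ i ∈ Finset.range n, (y (a i) δ - y (b i) δ)| ≤ 2 * M + 1 - (1/2 : ℝ) ^ n) := by
    classical
    intro n
    induction n with
    | zero =>
      exact ⟨id, id, fun i hi => absurd hi (Nat.not_lt_zero i),
        fun i j _ hj => absurd hj (Nat.not_lt_zero j), ∅,
        fun δ _ => by simp, fun δ => by simp [hM0]⟩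
    | succ n ih =>
      obtain ⟨a, b, hab, hba, G, hG1, hG2⟩ := ih
      set N := (Finset.range n).sup b with hN
      have hηpos : (0 : ℝ) < (1/2 : ℝ) ^ (n + 1) := by positivity
      obtain ⟨p, q, hNp, hpq, hsmall⟩ := exists_close_pair y M hM N G hηpos
      set a' := Function.update a n p with ha'
      set b' := Function.update b n q with hb'
      have ha'eq : ∀ i, i < n → a' i = a i := fun i hi =>
        Function.update_of_ne hi.ne _ _
      have hb'eq : ∀ i, i < n → b' i = b i := fun i hi =>
        Function.update_of_ne hi.ne _ _
      have ha'n : a' n = p := Function.update_self _ _ _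
      have hb'n : b' n = q := Function.update_self _ _ _
      have hbN : ∀ i, i < n → b i ≤ N := fun i hi =>
        Finset.le_sup (Finset.mem_range.mpr hi)
      set Big := (c0_finite_gt' (y p - y q) hηpos).toFinset with hBig
      have hdsum : ∀ δ : Δ, ∑ i ∈ Finset.range (n+1), (y (a' i) δ - y (b' i) δ) =
          (∑ i ∈ Finset.range n, (y (a i) δ - y (b i) δ)) + (y p δ - y q δ) := by
        intro δ
        rw [Finset.sum_range_succ, ha'n, hb'n]
        congr 1
        exact Finset.sum_congr rfl fun i hi => by
          rw [ha'eq i (Finset.mem_range.mp hi), hb'eq i (Finset.mem_range.mp hi)]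
      have hd2M : ∀ δ : Δ, |y p δ - y q δ| ≤ 2 * M := fun δ => by
        have := abs_sub (y p δ) (y q δ)
        have h1 := hM p δ; have h2 := hM q δ; linarith
      have hpow : (1/2 : ℝ) ^ n = 2 * (1/2 : ℝ) ^ (n + 1) := by ring
      refine ⟨a', b', ?_, ?_, G ∪ Big, ?_, ?_⟩
      · intro i hi
        rcases Nat.lt_succ_iff_lt_or_eq.mp hi with hi' | rfl
        · rw [ha'eq i hi', hb'eq i hi']; exact hab i hi'
        · rw [ha'n, hb'n]; exact hpq
      · intro i j hij hj
        rcases Nat.lt_succ_iff_lt_or_eq.mp hj with hj' | rfl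
        · rw [hb'eq i (hij.trans hj'), ha'eq j hj']; exact hba i j hij hj'
        · rw [hb'eq i hij, ha'n]
          exact lt_of_le_of_lt (hbN i hij) hNp
      · intro δ hδ
        rw [hdsum δ]
        have hδG : δ ∉ G := fun h => hδ (Finset.mem_union_left _ h)
        have hδB : δ ∉ Big := fun h => hδ (Finset.mem_union_right _ h)
        have h1 := hG1 δ hδG
        have h2 : |y p δ - y q δ| ≤ (1/2 : ℝ) ^ (n + 1) := by
          by_contra h
          exact hδB (by rw [hBig, Set.Finite.mem_toFinset]
                        simpa using not_le.mp h)
        calc |(∑ i ∈ Finset.range n, (y (a i) δ - y (b i) δ)) + (y p δ - y q δ)|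
            ≤ |∑ i ∈ Finset.range n, (y (a i) δ - y (b i) δ)| + |y p δ - y q δ| :=
              abs_add_le _ _
          _ ≤ 1 - (1/2 : ℝ) ^ (n + 1) := by rw [hpow] at h1; linarith
      · intro δ
        rw [hdsum δ]
        by_cases hδG : δ ∈ G
        · have h1 := hG2 δ
          have h2 := hsmall δ hδG
          calc |(∑ i ∈ Finset.range n, (y (a i) δ - y (b i) δ)) + (y p δ - y q δ)|
              ≤ |∑ i ∈ Finset.range n, (y (a i) δ - y (b i) δ)| + |y p δ - y q δ| :=
                abs_add_le _ _
            _ ≤ 2 * M + 1 - (1/2 : ℝ) ^ (n + 1) := by rw [hpow] at h1; linarith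
        · have h1 := hG1 δ hδG
          have h2 := hd2M δ
          calc |(∑ i ∈ Finset.range n, (y (a i) δ - y (b i) δ)) + (y p δ - y q δ)|
              ≤ |∑ i ∈ Finset.range n, (y (a i) δ - y (b i) δ)| + |y p δ - y q δ| :=
                abs_add_le _ _
            _ ≤ 2 * M + 1 - (1/2 : ℝ) ^ (n + 1) := by
                rw [hpow] at h1
                nlinarith [pow_pos (by norm_num : (0:ℝ) < 1/2) (n+1)]
  intro n
  obtain ⟨a, b, h1, h2, G, -, hG⟩ := main n
  refine ⟨a, b, h1, h2, fun δ => le_trans (hG δ) ?_⟩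
  have : (0:ℝ) ≤ (1/2 : ℝ) ^ n := by positivity
  linarith

/-- If a Banach space `X` with a normalized symmetric basis `(e γ)` (with symmetrized norm
`ns`) embeds into `c₀(Δ)` via a bounded linear map bounded below, then the sequence
`λ(n) = ‖∑_{k<n} e_{γ_k}‖ₛ` is bounded. -/
theorem lambda_bounded_of_embeds_c0
    {X : Type*} [NormedAddCommGroup X] [NormedSpace ℝ X] [CompleteSpace X]
    {Γ : Type*} [DecidableEq Γ] (e : Γ → X) (estar : Γ → StrongDual ℝ X)
    (hbio : ∀ γ δ, estar γ (e δ) = if γ = δ then (1 : ℝ) else 0)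
    (hspanX : (Submodule.span ℝ (Set.range e)).topologicalClosure = ⊤)
    (K : ℝ) (hK : 1 ≤ K)
    (ns : X → ℝ)
    (hns : ∀ x : X, ‖x‖ ≤ ns x ∧ ns x ≤ K * ‖x‖)
    (hnorme : ∀ γ, ns (e γ) = 1)
    (hsym : ∀ (π : Γ ≃ Γ) (sgn : Γ → ℝ), (∀ γ, sgn γ = 1 ∨ sgn γ = -1) →
      ∀ (F : Finset Γ) (a : Γ → ℝ),
        ns (∑ γ ∈ F, (sgn γ * a γ) • e (π γ)) = ns (∑ γ ∈ F, a γ • e γ))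
    (g : ℕ → Γ) (hg : Function.Injective g)
    (lam : ℕ → ℝ) (hlam : ∀ n, lam n = ns (∑ k ∈ Finset.range n, e (g k)))
    {Δ : Type*} [TopologicalSpace Δ] [DiscreteTopology Δ]
    (T : X →L[ℝ] C₀(Δ, ℝ))
    (hbelow : ∃ c : ℝ, 0 < c ∧ ∀ x : X, c * ‖x‖ ≤ ‖T x‖) :
    ∃ B : ℝ, ∀ n : ℕ, lam n ≤ B := by
  classical
  obtain ⟨c, hc, hbel⟩ := hbelow
  set M := ‖T‖ with hMdef
  have hM0 : 0 ≤ M := norm_nonneg T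
  set y : ℕ → C₀(Δ, ℝ) := fun k => T (e (g k)) with hy
  have he1 : ∀ γ : Γ, ‖e γ‖ ≤ 1 := fun γ => by
    have h := (hns (e γ)).1; rw [hnorme γ] at h; exact h
  have hyM : ∀ k, ‖y k‖ ≤ M := fun k =>
    le_trans (T.le_opNorm _) (mul_le_of_le_one_right hM0 (he1 _))
  have hMpt : ∀ k (δ : Δ), |y k δ| ≤ M := fun k δ =>
    le_trans (c0_abs_apply_le_norm (y k) δ) (hyM k)
  refine ⟨K * ((3 * M + 1) / c), fun n => ?_⟩
  set m := n / 2 with hm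
  obtain ⟨a, b, hab, hba, hGall⟩ := gliding y M hM0 hMpt m
  set r := (Finset.range m).sup a + (Finset.range m).sup b + 1 with hr
  have hra : ∀ i, i < m → a i < r := fun i hi => by
    have := Finset.le_sup (f := a) (Finset.mem_range.mpr hi); omega
  have hrb : ∀ i, i < m → b i < r := fun i hi => by
    have := Finset.le_sup (f := b) (Finset.mem_range.mpr hi); omega
  set s : ℕ → ℕ := fun k => if k = 2 * m then r else
    if k % 2 = 0 then a (k / 2) else b (k / 2) with hsdef
  set ε : ℕ → ℝ := fun k => if k % 2 = 0 then 1 else -1 with hεdef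
  have hε : ∀ k, ε k = 1 ∨ ε k = -1 := fun k => by
    by_cases h : k % 2 = 0 <;> simp [hεdef, h]
  have hn2 : n = 2 * m ∨ n = 2 * m + 1 := by omega
  -- basic facts about s
  have hs_even : ∀ k, k < 2 * m → k % 2 = 0 → s k = a (k / 2) := fun k h h2 => by
    simp only [hsdef]; rw [if_neg (by omega), if_pos h2]
  have hs_odd : ∀ k, k < 2 * m → k % 2 = 1 → s k = b (k / 2) := fun k h h2 => by
    simp only [hsdef]; rw [if_neg (by omega), if_neg (by omega)]
  have hs_top : s (2 * m) = r := by simp [hsdef]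
  have hs_bd : ∀ k, k < 2 * m → a (k / 2) ≤ s k ∧ s k ≤ b (k / 2) := by
    intro k h
    have hkm : k / 2 < m := by omega
    rcases Nat.mod_two_eq_zero_or_one k with h2 | h2
    · rw [hs_even k h h2]; exact ⟨le_refl _, (hab _ hkm).le⟩
    · rw [hs_odd k h h2]; exact ⟨(hab _ hkm).le, le_refl _⟩
  have hmono : ∀ k l, k < l → l ≤ 2 * m → s k < s l := by
    intro k l hkl hl
    have hk2m : k < 2 * m := lt_of_lt_of_le hkl hl
    rcases eq_or_lt_of_le hl with rfl | hl'
    · rw [hs_top]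
      have hkm : k / 2 < m := by omega
      exact lt_of_le_of_lt (hs_bd k hk2m).2 (hrb _ hkm)
    · have hi : k / 2 ≤ l / 2 := Nat.div_le_div_right hkl.le
      have hlm : l / 2 < m := by omega
      rcases eq_or_lt_of_le hi with heq | hlt
      · have hk0 : k % 2 = 0 := by omega
        have hl1 : l % 2 = 1 := by omega
        rw [hs_even k hk2m hk0, hs_odd l hl' hl1, ← heq]
        exact hab _ (by omega)
      · calc s k ≤ b (k / 2) := (hs_bd k hk2m).2
          _ < a (l / 2) := hba _ _ hlt hlm
          _ ≤ s l := (hs_bd l hl').1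
  have hsinj : ∀ i j, i < n → j < n → s i = s j → i = j := by
    intro i j hi hj hij
    have hi' : i ≤ 2 * m := by omega
    have hj' : j ≤ 2 * m := by omega
    rcases lt_trichotomy i j with h | h | h
    · exact absurd hij (hmono i j h hj').ne
    · exact h
    · exact absurd hij.symm (hmono j i h hi').ne
  set x : X := ∑ k ∈ Finset.range n, ε k • e (g (s k)) with hx
  -- bridge : lam n = ns x
  obtain ⟨σ, hσ⟩ := exists_perm_extend n s hsinj
  set π : Γ ≃ Γ := σ.viaEmbedding ⟨g, hg⟩ with hπ
  set sgn : Γ → ℝ := fun γ => ε (Function.invFun g γ) with hsgn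
  have hsgn1 : ∀ γ, sgn γ = 1 ∨ sgn γ = -1 := fun γ => hε _
  have hinj' : ∀ u ∈ Finset.range n, ∀ v ∈ Finset.range n, g u = g v → u = v :=
    fun u _ v _ h => hg h
  have hsym' := hsym π sgn hsgn1 ((Finset.range n).image g) (fun _ => 1)
  rw [Finset.sum_image hinj', Finset.sum_image hinj'] at hsym'
  have hL : ∑ k ∈ Finset.range n, (sgn (g k) * 1) • e (π (g k)) = x := by
    refine Finset.sum_congr rfl fun k hk => ?_
    have hk' := Finset.mem_range.mp hk
    have h1 : sgn (g k) = ε k := by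
      simp only [hsgn, Function.leftInverse_invFun hg k]
    have h2 : π (g k) = g (s k) := by
      have h3 := Equiv.Perm.viaEmbedding_apply σ ⟨g, hg⟩ k
      simp only [Function.Embedding.coeFn_mk] at h3
      rw [hπ, h3, hσ k hk']
    rw [h1, h2, mul_one]
  have hR : ∑ k ∈ Finset.range n, (1 : ℝ) • e (g k) = ∑ k ∈ Finset.range n, e (g k) := by
    simp
  rw [hL, hR] at hsym'
  have hlamx : lam n = ns x := by rw [hlam n, ← hsym']
  -- norm bound
  have hTx : T x = ∑ k ∈ Finset.range n, ε k • y (s k) := by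
    rw [hx, map_sum]
    exact Finset.sum_congr rfl fun k _ => by rw [map_smul]
  have hpt : ∀ δ : Δ, |(T x) δ| ≤ 3 * M + 1 := by
    intro δ
    have happ : (T x) δ = ∑ k ∈ Finset.range n, ε k * y (s k) δ := by
      rw [hTx, c0_sum_apply]
      exact Finset.sum_congr rfl fun k _ => by
        rw [ZeroAtInftyContinuousMap.coe_smul]; rfl
    have key : ∀ m' : ℕ, m' ≤ m →
        ∑ k ∈ Finset.range (2 * m'), ε k * y (s k) δ =
          ∑ i ∈ Finset.range m', (y (a i) δ - y (b i) δ) := by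
      intro m'
      induction m' with
      | zero => intro _; simp
      | succ m' ih =>
        intro hle
        have hlt : m' < m := by omega
        rw [show 2 * (m' + 1) = 2 * m' + 1 + 1 by ring, Finset.sum_range_succ,
          Finset.sum_range_succ, Finset.sum_range_succ, ih (by omega)]
        have e1 : ε (2 * m') = 1 := by simp [hεdef, Nat.mul_mod_right]
        have e2 : ε (2 * m' + 1) = -1 := by
          have hmod : (2 * m' + 1) % 2 = 1 := by omega
          simp [hεdef, hmod]
        have s1 : s (2 * m') = a m' := by
          rw [hs_even (2 * m') (by omega) (by omega)]
          congr 1; omega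
        have s2 : s (2 * m' + 1) = b m' := by
          rw [hs_odd (2 * m' + 1) (by omega) (by omega)]
          congr 1; omega
        rw [e1, e2, s1, s2]; ring
    have hpair := hGall δ
    rcases hn2 with hn | hn
    · rw [happ, hn, key m le_rfl]
      linarith
    · rw [happ, hn, Finset.sum_range_succ, key m le_rfl]
      have e1 : ε (2 * m) = 1 := by simp [hεdef, Nat.mul_mod_right]
      rw [e1, hs_top, one_mul]
      have h2 := hMpt r δ
      have h3 := abs_add_le (∑ i ∈ Finset.range m, (y (a i) δ - y (b i) δ)) (y r δ)
      linarith
  have hnormTx : ‖T x‖ ≤ 3 * M + 1 := c0_norm_le _ (by linarith) hpt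
  have hxle : ‖x‖ ≤ (3 * M + 1) / c := by
    rw [le_div_iff₀ hc, mul_comm]
    exact le_trans (hbel x) hnormTx
  calc lam n = ns x := hlamx
    _ ≤ K * ‖x‖ := (hns x).2
    _ ≤ K * ((3 * M + 1) / c) := by
        apply mul_le_mul_of_nonneg_left hxle (by linarith)
end

section
/- Let $X$ be a Banach space with a normalized unconditional basis $(e_\gamma)_{\gamma\in\Gamma}$ with unconditional basis constant $L$. If the sequence $\lambda(n) = \|\sum_{k=1}^n e_{\gamma_k}\|$ is bounded, then for every finite $F\subseteq\Gamma$ and reals $(a_\gamma)_{\gamma\in F}$, $L^{-1}\max_{\gamma\in F}|a_\gamma| \le \|\sum_{\gamma\in F} a_\gamma e_\gamma\| \le L \max_{\gamma\in F}|a_\gamma| \cdot \|\sum_{\gamma\in F} e_\gamma\|$, and hence $X$ is isomorphic to $c_0(\Gamma)$. -/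
open ZeroAtInfty

section Aux
variable {X : Type*} [NormedAddCommGroup X] [NormedSpace ℝ X]
variable {Γ : Type*} [DecidableEq Γ]

lemma coord_bound (e : Γ → X) (hnorme : ∀ γ, ‖e γ‖ = 1) (L : ℝ) (hL : 1 ≤ L)
    (huncond : ∀ (F : Finset Γ) (a sgn : Γ → ℝ), (∀ γ, sgn γ = 1 ∨ sgn γ = -1) →
      ‖∑ γ ∈ F, (sgn γ * a γ) • e γ‖ ≤ L * ‖∑ γ ∈ F, a γ • e γ‖)
    (F : Finset Γ) (a : Γ → ℝ) {δ : Γ} (hδ : δ ∈ F) :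
    |a δ| ≤ L * ‖∑ γ ∈ F, a γ • e γ‖ := by
  set x := ∑ γ ∈ F, a γ • e γ with hx
  classical
  set sgn : Γ → ℝ := fun γ => if γ = δ then 1 else -1 with hsgn
  have hs : ∀ γ, sgn γ = 1 ∨ sgn γ = -1 := by
    intro γ; by_cases h : γ = δ <;> simp [hsgn, h]
  have h1 := huncond F a sgn hs
  have hsum : ∑ γ ∈ F, (sgn γ * a γ) • e γ + x = (2 * a δ) • e δ := by
    rw [hx, ← Finset.sum_add_distrib]
    have hterm : ∀ γ ∈ F, ((sgn γ * a γ) • e γ + a γ • e γ)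
        = if γ = δ then (2 * a δ) • e δ else 0 := by
      intro γ _
      by_cases h : γ = δ
      · subst h; simp [hsgn, ← add_smul]; ring_nf
      · simp [hsgn, h, ← add_smul]
    rw [Finset.sum_congr rfl hterm, Finset.sum_ite_eq' F δ (fun _ => (2 * a δ) • e δ)]
    simp [hδ]
  have hn : ‖(2 * a δ) • e δ‖ = 2 * |a δ| := by
    rw [norm_smul, hnorme, Real.norm_eq_abs, abs_mul]
    simp
  have h2 : 2 * |a δ| ≤ L * ‖x‖ + ‖x‖ := by
    calc 2 * |a δ| = ‖∑ γ ∈ F, (sgn γ * a γ) • e γ + x‖ := by rw [hsum, hn]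
    _ ≤ ‖∑ γ ∈ F, (sgn γ * a γ) • e γ‖ + ‖x‖ := norm_add_le _ _
    _ ≤ L * ‖x‖ + ‖x‖ := by linarith
  nlinarith [norm_nonneg x]

end Aux

section Aux
variable {X : Type*} [NormedAddCommGroup X] [NormedSpace ℝ X]
variable {Γ : Type*} [DecidableEq Γ]

lemma convex_pt (v u : X) {c : ℝ} (hc : |c| ≤ 1) :
    ‖v + c • u‖ ≤ max ‖v + u‖ ‖v - u‖ := by
  set t : ℝ := (1 + c) / 2 with ht
  have h1 : 0 ≤ t := by rw [ht]; cases abs_le.1 hc; linarith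
  have h2 : 0 ≤ 1 - t := by rw [ht]; cases abs_le.1 hc; linarith
  have key : v + c • u = t • (v + u) + (1 - t) • (v - u) := by
    rw [smul_add, smul_sub]
    have : c • u = t • u - (1 - t) • u := by
      rw [← sub_smul]; congr 1; rw [ht]; ring
    rw [this]
    have : t • v + (1 - t) • v = v := by rw [← add_smul]; simp
    module
  calc ‖v + c • u‖ = ‖t • (v + u) + (1 - t) • (v - u)‖ := by rw [key]
  _ ≤ t * ‖v + u‖ + (1 - t) * ‖v - u‖ := by
      refine (norm_add_le _ _).trans ?_
      rw [norm_smul, norm_smul, Real.norm_eq_abs, Real.norm_eq_abs,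
        abs_of_nonneg h1, abs_of_nonneg h2]
  _ ≤ t * max ‖v + u‖ ‖v - u‖ + (1 - t) * max ‖v + u‖ ‖v - u‖ := by
      gcongr
      · exact le_max_left _ _
      · exact le_max_right _ _
  _ = max ‖v + u‖ ‖v - u‖ := by ring
end Aux

section Aux2
variable {X : Type*} [NormedAddCommGroup X] [NormedSpace ℝ X]
variable {Γ : Type*} [DecidableEq Γ]

lemma sign_dominate (e : Γ → X) (F : Finset Γ) :
    ∀ (a : Γ → ℝ) (v : X), (∀ γ ∈ F, |a γ| ≤ 1) →
    ∃ sgn : Γ → ℝ, (∀ γ, sgn γ = 1 ∨ sgn γ = -1) ∧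
      ‖v + ∑ γ ∈ F, a γ • e γ‖ ≤ ‖v + ∑ γ ∈ F, sgn γ • e γ‖ := by
  classical
  induction F using Finset.induction_on with
  | empty =>
      intro a v _
      exact ⟨fun _ => 1, fun _ => Or.inl rfl, by simp⟩
  | @insert γ0 F hγ0 ih =>
      intro a v ha
      obtain ⟨sgn, hs, hle⟩ := ih a (v + a γ0 • e γ0)
        (fun γ hγ => ha γ (Finset.mem_insert_of_mem hγ))
      have ha0 : |a γ0| ≤ 1 := ha γ0 (Finset.mem_insert_self _ _)
      set w : X := v + ∑ γ ∈ F, sgn γ • e γ with hw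
      have hcx : ‖w + a γ0 • e γ0‖ ≤ max ‖w + e γ0‖ ‖w - e γ0‖ := convex_pt w (e γ0) ha0
      by_cases hmax : ‖w + e γ0‖ ≤ ‖w - e γ0‖
      · refine ⟨Function.update sgn γ0 (-1), ?_, ?_⟩
        · intro γ
          by_cases h : γ = γ0
          · subst h; simp
          · simpa [Function.update_of_ne h] using hs γ
        · rw [Finset.sum_insert hγ0, Finset.sum_insert hγ0]
          have hFs : ∑ γ ∈ F, (Function.update sgn γ0 (-1) γ) • e γ
              = ∑ γ ∈ F, sgn γ • e γ := by
            refine Finset.sum_congr rfl fun γ hγ => ?_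
            have hne : γ ≠ γ0 := fun h => hγ0 (h ▸ hγ)
            rw [Function.update_of_ne hne]
          rw [hFs, Function.update_self]
          calc ‖v + (a γ0 • e γ0 + ∑ γ ∈ F, a γ • e γ)‖
              = ‖(v + a γ0 • e γ0) + ∑ γ ∈ F, a γ • e γ‖ := by rw [add_assoc]
            _ ≤ ‖(v + a γ0 • e γ0) + ∑ γ ∈ F, sgn γ • e γ‖ := hle
            _ = ‖w + a γ0 • e γ0‖ := by rw [hw]; congr 1; abel
            _ ≤ ‖w - e γ0‖ := le_trans hcx (by simp [hmax])
            _ = ‖v + ((-1 : ℝ) • e γ0 + ∑ γ ∈ F, sgn γ • e γ)‖ := by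
                rw [hw]; congr 1; module
      · refine ⟨Function.update sgn γ0 1, ?_, ?_⟩
        · intro γ
          by_cases h : γ = γ0
          · subst h; simp
          · simpa [Function.update_of_ne h] using hs γ
        · rw [Finset.sum_insert hγ0, Finset.sum_insert hγ0]
          have hFs : ∑ γ ∈ F, (Function.update sgn γ0 1 γ) • e γ
              = ∑ γ ∈ F, sgn γ • e γ := by
            refine Finset.sum_congr rfl fun γ hγ => ?_
            have hne : γ ≠ γ0 := fun h => hγ0 (h ▸ hγ)
            rw [Function.update_of_ne hne]
          rw [hFs, Function.update_self]
          calc ‖v + (a γ0 • e γ0 + ∑ γ ∈ F, a γ • e γ)‖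
              = ‖(v + a γ0 • e γ0) + ∑ γ ∈ F, a γ • e γ‖ := by rw [add_assoc]
            _ ≤ ‖(v + a γ0 • e γ0) + ∑ γ ∈ F, sgn γ • e γ‖ := hle
            _ = ‖w + a γ0 • e γ0‖ := by rw [hw]; congr 1; abel
            _ ≤ ‖w + e γ0‖ := le_trans hcx (by simp [le_of_not_ge hmax])
            _ = ‖v + ((1 : ℝ) • e γ0 + ∑ γ ∈ F, sgn γ • e γ)‖ := by
                rw [hw]; congr 1; module
end Aux2

section Aux3
variable {X : Type*} [NormedAddCommGroup X] [NormedSpace ℝ X]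
variable {Γ : Type*} [DecidableEq Γ]

lemma upper_bound (e : Γ → X) (L : ℝ) (hL : 1 ≤ L)
    (huncond : ∀ (F : Finset Γ) (a sgn : Γ → ℝ), (∀ γ, sgn γ = 1 ∨ sgn γ = -1) →
      ‖∑ γ ∈ F, (sgn γ * a γ) • e γ‖ ≤ L * ‖∑ γ ∈ F, a γ • e γ‖)
    (F : Finset Γ) (a : Γ → ℝ) (hF : F.Nonempty) :
    ‖∑ γ ∈ F, a γ • e γ‖ ≤ L * F.sup' hF (fun γ => |a γ|) * ‖∑ γ ∈ F, e γ‖ := by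
  set M := F.sup' hF (fun γ => |a γ|) with hM
  have hM0 : 0 ≤ M := by
    obtain ⟨γ, hγ⟩ := hF
    exact le_trans (abs_nonneg (a γ)) (Finset.le_sup' (fun γ => |a γ|) hγ)
  have hsign : ‖∑ γ ∈ F, (fun _ => (1:ℝ) / M * M) 0 • e γ‖ = 0 → True := fun _ => trivial
  rcases eq_or_lt_of_le hM0 with h0 | h0
  · have hz : ∀ γ ∈ F, a γ = 0 := by
      intro γ hγ
      have := Finset.le_sup' (fun γ => |a γ|) hγ
      rw [← hM, ← h0] at this
      exact abs_eq_zero.1 (le_antisymm this (abs_nonneg _))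
    rw [Finset.sum_congr rfl (fun γ hγ => by rw [hz γ hγ, zero_smul])]
    simp [← h0]
  · set b : Γ → ℝ := fun γ => a γ / M with hb
    have hb1 : ∀ γ ∈ F, |b γ| ≤ 1 := by
      intro γ hγ
      rw [hb, abs_div, abs_of_pos h0, div_le_one h0]
      exact Finset.le_sup' (fun γ => |a γ|) hγ
    obtain ⟨sgn, hs, hle⟩ := sign_dominate e F b 0 hb1
    simp only [zero_add] at hle
    have h1 : ‖∑ γ ∈ F, sgn γ • e γ‖ ≤ L * ‖∑ γ ∈ F, e γ‖ := by
      have := huncond F (fun _ => 1) sgn hs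
      simpa using this
    have hab : ∑ γ ∈ F, a γ • e γ = M • ∑ γ ∈ F, b γ • e γ := by
      rw [Finset.smul_sum]
      refine Finset.sum_congr rfl fun γ _ => ?_
      rw [hb, smul_smul]
      congr 1
      field_simp
    rw [hab, norm_smul, Real.norm_eq_abs, abs_of_pos h0]
    calc M * ‖∑ γ ∈ F, b γ • e γ‖ ≤ M * (L * ‖∑ γ ∈ F, e γ‖) :=
          mul_le_mul_of_nonneg_left (le_trans hle h1) hM0
      _ = L * M * ‖∑ γ ∈ F, e γ‖ := by ring

lemma lower_bound (e : Γ → X) (hnorme : ∀ γ, ‖e γ‖ = 1) (L : ℝ) (hL : 1 ≤ L)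
    (huncond : ∀ (F : Finset Γ) (a sgn : Γ → ℝ), (∀ γ, sgn γ = 1 ∨ sgn γ = -1) →
      ‖∑ γ ∈ F, (sgn γ * a γ) • e γ‖ ≤ L * ‖∑ γ ∈ F, a γ • e γ‖)
    (F : Finset Γ) (a : Γ → ℝ) (hF : F.Nonempty) :
    L⁻¹ * F.sup' hF (fun γ => |a γ|) ≤ ‖∑ γ ∈ F, a γ • e γ‖ := by
  have hL0 : (0:ℝ) < L := lt_of_lt_of_le one_pos hL
  rw [inv_mul_le_iff₀ hL0]
  exact Finset.sup'_le hF _ fun γ hγ =>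
    coord_bound e hnorme L hL huncond F a hγ

end Aux3
/-- For a normalized unconditional basis `(e γ)` with unconditional constant `L`, if the
norms `‖∑_{γ ∈ F} e γ‖` are uniformly bounded over finite `F` (i.e. `λ(n)` is bounded),
then for all finite `F` and reals `(a γ)`,
`L⁻¹ max |a γ| ≤ ‖∑ a γ e γ‖ ≤ L (max |a γ|) ‖∑_{γ∈F} e γ‖`, and `X` is isomorphic to
`c₀(Γ)`. -/
theorem isomorphic_c0_of_lambda_bounded
    {X : Type*} [NormedAddCommGroup X] [NormedSpace ℝ X] [CompleteSpace X]
    {Γ : Type*} [TopologicalSpace Γ] [DiscreteTopology Γ] [DecidableEq Γ]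
    (e : Γ → X) (estar : Γ → StrongDual ℝ X)
    (hbio : ∀ γ δ, estar γ (e δ) = if γ = δ then (1 : ℝ) else 0)
    (hspanX : (Submodule.span ℝ (Set.range e)).topologicalClosure = ⊤)
    (hnorme : ∀ γ, ‖e γ‖ = 1)
    (L : ℝ) (hL : 1 ≤ L)
    (huncond : ∀ (F : Finset Γ) (a sgn : Γ → ℝ), (∀ γ, sgn γ = 1 ∨ sgn γ = -1) →
      ‖∑ γ ∈ F, (sgn γ * a γ) • e γ‖ ≤ L * ‖∑ γ ∈ F, a γ • e γ‖)
    (hblam : ∃ B : ℝ, ∀ F : Finset Γ, ‖∑ γ ∈ F, e γ‖ ≤ B) :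
    (∀ (F : Finset Γ) (a : Γ → ℝ) (hF : F.Nonempty),
      L⁻¹ * F.sup' hF (fun γ => |a γ|) ≤ ‖∑ γ ∈ F, a γ • e γ‖ ∧
      ‖∑ γ ∈ F, a γ • e γ‖ ≤ L * F.sup' hF (fun γ => |a γ|) * ‖∑ γ ∈ F, e γ‖) ∧
    Nonempty (X ≃L[ℝ] C₀(Γ, ℝ)) := by
  classical
  obtain ⟨B, hB⟩ := hblam
  have hL0 : (0:ℝ) < L := lt_of_lt_of_le one_pos hL
  have hB0 : (0:ℝ) ≤ B := by
    have := hB ∅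
    simpa using this
  refine ⟨fun F a hF => ⟨lower_bound e hnorme L hL huncond F a hF,
    upper_bound e L hL huncond F a hF⟩, ?_⟩
  -- density of the span
  have hdense : Dense ((Submodule.span ℝ (Set.range e) : Submodule ℝ X) : Set X) :=
    Submodule.dense_iff_topologicalClosure_eq_top.mpr hspanX
  -- coordinates of finite sums
  have hrepF : ∀ (F : Finset Γ) (a : Γ → ℝ) (γ : Γ),
      estar γ (∑ δ ∈ F, a δ • e δ) = if γ ∈ F then a γ else 0 := by
    intro F a γ
    rw [map_sum]
    have h : ∀ δ ∈ F, estar γ (a δ • e δ) = if γ = δ then a δ else 0 := by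
      intro δ _
      rw [map_smul, hbio, smul_eq_mul]
      by_cases h : γ = δ <;> simp [h]
    rw [Finset.sum_congr rfl h, Finset.sum_ite_eq]
  -- coordinate functionals are bounded by L on the span, and finitely supported there
  have hcoord_span : ∀ x ∈ (Submodule.span ℝ (Set.range e) : Submodule ℝ X),
      (∀ γ, |estar γ x| ≤ L * ‖x‖) ∧
        ∃ F : Finset Γ, ∀ δ, δ ∉ F → estar δ x = 0 := by
    intro x hx
    obtain ⟨c, rfl⟩ := Finsupp.mem_span_range_iff_exists_finsupp.mp hx
    rw [Finsupp.sum]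
    constructor
    · intro γ
      rw [hrepF]
      by_cases h : γ ∈ c.support
      · simp only [h, if_true]
        exact coord_bound e hnorme L hL huncond c.support (fun δ => c δ) h
      · simp only [h, if_false, abs_zero]
        positivity
    · refine ⟨c.support, fun δ hδ => ?_⟩
      rw [hrepF]
      simp [hδ]
  have hcoord : ∀ (x : X) (γ : Γ), |estar γ x| ≤ L * ‖x‖ := by
    intro x γ
    have hcl : IsClosed {x : X | |estar γ x| ≤ L * ‖x‖} :=
      isClosed_le (continuous_abs.comp (estar γ).continuous)
        (continuous_const.mul continuous_norm)
    have hsub : ((Submodule.span ℝ (Set.range e) : Submodule ℝ X) : Set X)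
        ⊆ {x : X | |estar γ x| ≤ L * ‖x‖} := fun y hy => (hcoord_span y hy).1 γ
    have h := hcl.closure_subset_iff.mpr hsub
    rw [hdense.closure_eq] at h
    exact h (Set.mem_univ x)
  -- the coordinate map goes to zero at infinity
  have hzero : ∀ x : X, Filter.Tendsto (fun γ => estar γ x)
      (Filter.cocompact Γ) (nhds 0) := by
    intro x
    rw [Filter.cocompact_eq_cofinite, Metric.tendsto_nhds]
    intro ε hε
    rw [Filter.eventually_cofinite]
    obtain ⟨y, hy, hxy⟩ := hdense.exists_dist_lt x (div_pos hε hL0)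
    obtain ⟨-, F, hF⟩ := hcoord_span y hy
    refine F.finite_toSet.subset ?_
    intro γ hγ
    by_contra hγF
    apply hγ
    rw [Real.dist_eq, sub_zero]
    have h1 : estar γ x = estar γ (x - y) := by
      rw [map_sub, hF γ hγF, sub_zero]
    calc |estar γ x| = |estar γ (x - y)| := by rw [h1]
      _ ≤ L * ‖x - y‖ := hcoord _ _
      _ < L * (ε / L) := by
          refine mul_lt_mul_of_pos_left ?_ hL0
          rwa [← dist_eq_norm]
      _ = ε := by field_simp
  -- the coordinate map as a linear map into C₀
  let T₀ : X →ₗ[ℝ] C₀(Γ, ℝ) :=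
    { toFun := fun x => ⟨⟨fun γ => estar γ x, continuous_of_discreteTopology⟩, hzero x⟩
      map_add' := fun x y => by ext γ; simp
      map_smul' := fun t x => by ext γ; simp }
  have hnorm_le : ∀ (f : C₀(Γ, ℝ)) (C : ℝ), 0 ≤ C → (∀ γ, |f γ| ≤ C) → ‖f‖ ≤ C := by
    intro f C hC h
    rw [← ZeroAtInftyContinuousMap.norm_toBCF_eq_norm]
    exact (BoundedContinuousFunction.norm_le hC).mpr h
  have hcoe_le : ∀ (f : C₀(Γ, ℝ)) (γ : Γ), |f γ| ≤ ‖f‖ := by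
    intro f γ
    rw [← ZeroAtInftyContinuousMap.norm_toBCF_eq_norm]
    exact f.toBCF.norm_coe_le_norm γ
  let T : X →L[ℝ] C₀(Γ, ℝ) :=
    T₀.mkContinuous L (fun x =>
      hnorm_le _ _ (mul_nonneg hL0.le (norm_nonneg x)) (fun γ => hcoord x γ))
  have hTx : ∀ (x : X) (γ : Γ), T x γ = estar γ x := fun x γ => rfl
  -- lower bound for T
  have hlow : ∀ x : X, ‖x‖ ≤ L * B * ‖T x‖ := by
    have hcl : IsClosed {x : X | ‖x‖ ≤ L * B * ‖T x‖} :=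
      isClosed_le continuous_norm
        (continuous_const.mul (continuous_norm.comp T.continuous))
    have hsub : ((Submodule.span ℝ (Set.range e) : Submodule ℝ X) : Set X)
        ⊆ {x : X | ‖x‖ ≤ L * B * ‖T x‖} := by
      intro y hy
      obtain ⟨c, rfl⟩ := Finsupp.mem_span_range_iff_exists_finsupp.mp hy
      rw [Set.mem_setOf_eq, Finsupp.sum]
      rcases Finset.eq_empty_or_nonempty c.support with h | hne
      · rw [h, Finset.sum_empty, norm_zero]
        exact mul_nonneg (mul_nonneg hL0.le hB0) (norm_nonneg _)
      · set x := ∑ γ ∈ c.support, (c γ) • e γ with hxdef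
        have h1 := upper_bound e L hL huncond c.support (fun δ => c δ) hne
        set s := c.support.sup' hne (fun γ => |c γ|) with hs
        have hs0 : 0 ≤ s := by
          obtain ⟨γ, hγ⟩ := hne
          exact le_trans (abs_nonneg (c γ)) (Finset.le_sup' (fun γ => |c γ|) hγ)
        have h2 : s ≤ ‖T x‖ := by
          refine Finset.sup'_le hne _ fun γ hγ => ?_
          have hcx : estar γ x = c γ := by
            rw [hxdef, hrepF]
            simp [hγ]
          calc |c γ| = |T x γ| := by rw [hTx, hcx]
            _ ≤ ‖T x‖ := hcoe_le _ γ
        calc ‖x‖ ≤ L * s * ‖∑ γ ∈ c.support, e γ‖ := h1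
          _ ≤ L * s * B := mul_le_mul_of_nonneg_left (hB c.support)
              (mul_nonneg hL0.le hs0)
          _ = L * B * s := by ring
          _ ≤ L * B * ‖T x‖ := mul_le_mul_of_nonneg_left h2
              (mul_nonneg hL0.le hB0)
    intro x
    have h := hcl.closure_subset_iff.mpr hsub
    rw [hdense.closure_eq] at h
    exact h (Set.mem_univ x)
  -- injectivity
  have hinj : LinearMap.ker (T : X →ₗ[ℝ] C₀(Γ, ℝ)) = ⊥ := by
    rw [LinearMap.ker_eq_bot']
    intro x hx
    have h := hlow x
    rw [show T x = 0 from hx, norm_zero, mul_zero] at h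
    exact norm_le_zero_iff.mp h
  -- surjectivity
  have hsurj : LinearMap.range (T : X →ₗ[ℝ] C₀(Γ, ℝ)) = ⊤ := by
    have hanti : AntilipschitzWith (⟨L * B, mul_nonneg hL0.le hB0⟩ : NNReal) T :=
      ContinuousLinearMap.antilipschitz_of_bound T hlow
    have hclosed : IsClosed (Set.range T) := hanti.isClosed_range T.uniformContinuous
    have hdr : Dense (Set.range T) := by
      rw [Metric.dense_iff]
      intro f ε hε
      have h0 := f.zero_at_infty'
      rw [Filter.cocompact_eq_cofinite, Metric.tendsto_nhds] at h0
      have h1 := h0 (ε/2) (by linarith)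
      rw [Filter.eventually_cofinite] at h1
      set F := h1.toFinset with hFdef
      set y := ∑ γ ∈ F, f γ • e γ with hydef
      refine ⟨T y, ?_, Set.mem_range_self y⟩
      rw [Metric.mem_ball, dist_eq_norm]
      have hTy : ∀ γ, T y γ = if γ ∈ F then f γ else 0 := by
        intro γ
        rw [hTx, hydef, hrepF]
      have hle : ‖T y - f‖ ≤ ε/2 := by
        refine hnorm_le _ _ (by linarith) fun γ => ?_
        have : (T y - f) γ = T y γ - f γ := rfl
        rw [this, hTy]
        by_cases h : γ ∈ F
        · simp [h, half_pos hε |>.le]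
        · simp only [h, if_false, zero_sub, abs_neg]
          have : ¬¬ dist (f γ) 0 < ε/2 := by
            intro hc
            exact h (by rw [hFdef, Set.Finite.mem_toFinset]; exact hc)
          rw [Real.dist_eq, sub_zero] at this
          exact le_of_lt (not_not.mp this)
      linarith
    have huniv : Set.range T = Set.univ := by
      rw [← hclosed.closure_eq, hdr.closure_eq]
    exact LinearMap.range_eq_top.mpr (Set.range_eq_univ.mp huniv)
  exact ⟨ContinuousLinearEquiv.ofBijective T hinj hsurj⟩
end

section
/- Let $w_n = 1/n$. In $d_*(w,1) = d_*(w,1,\mathbb{N})$ with $\lambda(k) = k/\mu(k)$ and $\mu(k) = \sum_{i=1}^k 1/i$, we have $\sup_n \|\sum_{k=1}^n e_k/\lambda(k)\| = \infty$; in fact $\|\sum_{k=1}^n e_k/\lambda(k)\| \ge \frac{1}{1+\log n}\sum_{k=1}^n \frac{\log k}{k} \ge \frac{\log^2(n) - \log^2(3)}{2(1+\log n)}$ for $n \ge 3$. -/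
noncomputable section

/-- The norm of the predual `d_*(w,1,ℕ)`: `‖x‖ = sup_k x̄(k)` where
`x̄(k) = max { (∑_{i≤k} |x(γ_i)|) / (∑_{i≤k} w_i) : γ_1,…,γ_k distinct }`. -/
def lorentzPredualNorm (w : ℕ → ℝ) (x : ℕ → ℝ) : ℝ :=
  ⨆ k : ℕ, sSup {r : ℝ | ∃ g : Fin (k + 1) → ℕ, Function.Injective g ∧
    r = (∑ i, |x (g i)|) / (∑ i : Fin (k + 1), w ((i : ℕ) + 1))}

lemma logsq_step {a : ℝ} (ha : 3 ≤ a) :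
    Real.log (a + 1) ^ 2 / 2 - Real.log a ^ 2 / 2 ≤ Real.log a / a := by
  have h0 : (0:ℝ) < a := by linarith
  have hsub : Set.uIcc a (a+1) ⊆ {(0:ℝ)}ᶜ := by
    rw [Set.uIcc_of_le (by linarith)]
    intro t ht
    simp only [Set.mem_compl_iff, Set.mem_singleton_iff]
    have := ht.1; intro h; rw [h] at this; linarith
  have hcont : ContinuousOn (fun t : ℝ => Real.log t / t) (Set.uIcc a (a+1)) := by
    apply ContinuousOn.div (Real.continuousOn_log.mono hsub) continuousOn_id
    intro t ht
    have := hsub ht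
    simpa using this
  have hderiv : ∀ t ∈ Set.uIcc a (a+1),
      HasDerivAt (fun t : ℝ => Real.log t ^ 2 / 2) (Real.log t / t) t := by
    intro t ht
    have ht0 : t ≠ 0 := by simpa using hsub ht
    have h := ((Real.hasDerivAt_log ht0).pow 2).div_const 2
    refine h.congr_deriv ?_
    norm_num
    field_simp
  have hftc := intervalIntegral.integral_eq_sub_of_hasDerivAt hderiv hcont.intervalIntegrable
  have hmono : ∫ t in a..(a+1), Real.log t / t ≤ ∫ t in a..(a+1), Real.log a / a := by
    apply intervalIntegral.integral_mono_on (by linarith) hcont.intervalIntegrable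
      intervalIntegrable_const
    intro t ht
    have he : Real.exp 1 ≤ a := by
      have := Real.exp_one_lt_d9
      linarith
    exact Real.log_div_self_antitoneOn (by simpa using he) (by simp; linarith [ht.1]) ht.1
  rw [hftc] at hmono
  rw [intervalIntegral.integral_const] at hmono
  simpa using hmono

lemma sum_log_div_ge (n : ℕ) (hn : 3 ≤ n) :
    (Real.log ((n:ℝ)+1) ^ 2 - Real.log 3 ^ 2) / 2
      ≤ ∑ k ∈ Finset.range n, Real.log ((k:ℝ)+1) / ((k:ℝ)+1) := by
  induction n with
  | zero => omega
  | succ m ih =>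
    rcases Nat.lt_or_ge m 3 with h | h
    · have hm : m = 2 := by omega
      subst hm
      have h3 := logsq_step (le_refl (3:ℝ))
      have h2 : (0:ℝ) ≤ Real.log 2 := Real.log_nonneg (by norm_num)
      rw [Finset.sum_range_succ, Finset.sum_range_succ, Finset.sum_range_succ]
      push_cast
      norm_num
      linarith
    · have h1 := ih h
      have hm3 : (3:ℝ) ≤ (m:ℝ) + 1 := by
        have : (3:ℝ) ≤ (m:ℝ) := by exact_mod_cast h
        linarith
      have h2 := logsq_step hm3
      rw [Finset.sum_range_succ]
      push_cast
      linarith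

/-- In `d_*(w,1)` with `w_n = 1/n`, `μ(k) = ∑_{i=1}^k 1/i` and `λ(k) = k/μ(k)`, the norms
`‖∑_{k=1}^n e_k/λ(k)‖` are unbounded; indeed for `n ≥ 3`,
`‖∑_{k=1}^n e_k/λ(k)‖ ≥ (∑_{k=1}^n (log k)/k)/(1 + log n) ≥ (log²n - log²3)/(2(1+log n))`. -/
theorem lorentz_predual_harmonic_lambda_unbounded
    (w : ℕ → ℝ) (hw : ∀ n, w n = 1 / n)
    (mu lam : ℕ → ℝ)
    (hmu : ∀ k, mu k = ∑ i ∈ Finset.range k, 1 / ((i : ℝ) + 1))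
    (hlam : ∀ k, lam k = k / mu k)
    (x : ℕ → ℕ → ℝ)
    (hx : ∀ n, x n = fun i => ∑ k ∈ Finset.range n, (1 / lam (k + 1)) * (if i = k then 1 else 0)) :
    (∀ n : ℕ, 3 ≤ n →
      (1 / (1 + Real.log n)) * ∑ k ∈ Finset.range n, Real.log (k + 1) / (k + 1)
        ≤ lorentzPredualNorm w (x n) ∧
      (Real.log n ^ 2 - Real.log 3 ^ 2) / (2 * (1 + Real.log n))
        ≤ (1 / (1 + Real.log n)) * ∑ k ∈ Finset.range n, Real.log (k + 1) / (k + 1)) ∧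
    ¬ ∃ B : ℝ, ∀ n : ℕ, lorentzPredualNorm w (x n) ≤ B := by
  -- basic facts about mu
  have hmuh : ∀ k : ℕ, mu k = (harmonic k : ℝ) := by
    intro k
    rw [hmu, harmonic]
    push_cast
    simp [one_div]
  have hmu_nonneg : ∀ k, 0 ≤ mu k := by
    intro k; rw [hmu]; positivity
  have hmu_one_le : ∀ k : ℕ, 1 ≤ mu (k + 1) := by
    intro k
    rw [hmu]
    calc (1:ℝ) = ∑ i ∈ Finset.range 1, 1 / ((i:ℝ)+1) := by norm_num
    _ ≤ _ := Finset.sum_le_sum_of_subset_of_nonneg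
        (Finset.range_subset_range.mpr (by omega)) (by intro i _ _; positivity)
  -- value of x
  have hxval : ∀ n i : ℕ, x n i = if i ∈ Finset.range n then mu (i+1) / ((i:ℝ)+1) else 0 := by
    intro n i
    rw [hx]
    simp only [mul_ite, mul_one, mul_zero, Finset.sum_ite_eq]
    by_cases h : i ∈ Finset.range n <;> simp only [h, if_true, if_false]
    rw [hlam, one_div_div]
    push_cast
    ring
  have hxnonneg : ∀ n i, 0 ≤ x n i := by
    intro n i
    rw [hxval]
    split
    · have := hmu_nonneg (i+1); positivity
    · exact le_refl 0
  -- main lower bound on the norm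
  have hmain : ∀ n : ℕ, 3 ≤ n →
      (1 / (1 + Real.log n)) * ∑ k ∈ Finset.range n, Real.log (k + 1) / (k + 1)
        ≤ lorentzPredualNorm w (x n) := by
    intro n hn
    set N : ℝ := ∑ i ∈ Finset.range n, |x n i| with hN
    have hN0 : 0 ≤ N := Finset.sum_nonneg fun i _ => abs_nonneg _
    -- denominator of any term equals mu (k+1)
    have hden : ∀ k : ℕ, (∑ i : Fin (k + 1), w ((i : ℕ) + 1)) = mu (k+1) := by
      intro k
      rw [Fin.sum_univ_eq_sum_range (fun i => w (i+1)), hmu]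
      apply Finset.sum_congr rfl
      intro i _
      rw [hw]
      push_cast
      ring
    -- every element of each set is ≤ N
    have hub : ∀ k : ℕ, ∀ r ∈ {r : ℝ | ∃ g : Fin (k + 1) → ℕ, Function.Injective g ∧
        r = (∑ i, |x n (g i)|) / (∑ i : Fin (k + 1), w ((i : ℕ) + 1))}, r ≤ N := by
      rintro k r ⟨g, hg, rfl⟩
      rw [hden]
      have hM : (∑ i, |x n (g i)|) ≤ N := by
        rw [show (∑ i, |x n (g i)|) = ∑ j ∈ Finset.univ.image g, |x n j| from
          (Finset.sum_image (s := Finset.univ) (g := g) (f := fun j => |x n j|) (fun a _ b _ h => hg h)).symm]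
        calc ∑ j ∈ Finset.univ.image g, |x n j|
            = ∑ j ∈ (Finset.univ.image g) ∩ Finset.range n, |x n j| := by
              refine (Finset.sum_subset (Finset.inter_subset_left) ?_).symm
              intro j hj hj'
              have hjn : j ∉ Finset.range n := fun h => hj' (Finset.mem_inter.mpr ⟨hj, h⟩)
              rw [hxval, if_neg hjn, abs_zero]
          _ ≤ N := Finset.sum_le_sum_of_subset_of_nonneg (Finset.inter_subset_right)
              (fun j _ _ => abs_nonneg _)
      have hM0 : 0 ≤ ∑ i, |x n (g i)| := Finset.sum_nonneg fun i _ => abs_nonneg _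
      calc (∑ i, |x n (g i)|) / mu (k+1) ≤ ∑ i, |x n (g i)| :=
            div_le_self hM0 (hmu_one_le k)
        _ ≤ N := hM
    have hsSup_le : ∀ k : ℕ, sSup {r : ℝ | ∃ g : Fin (k + 1) → ℕ, Function.Injective g ∧
        r = (∑ i, |x n (g i)|) / (∑ i : Fin (k + 1), w ((i : ℕ) + 1))} ≤ N :=
      fun k => Real.sSup_le (hub k) hN0
    -- the witness element at k = n - 1
    obtain ⟨m, hm⟩ : ∃ m, n = m + 1 := ⟨n - 1, by omega⟩
    have hr0 : N / mu n ∈ {r : ℝ | ∃ g : Fin (m + 1) → ℕ, Function.Injective g ∧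
        r = (∑ i, |x n (g i)|) / (∑ i : Fin (m + 1), w ((i : ℕ) + 1))} := by
      refine ⟨fun i => (i : ℕ), fun a b h => Fin.ext h, ?_⟩
      rw [hden, ← hm]
      congr 1
      exact (Fin.sum_univ_eq_sum_range (fun i => |x n i|) n).symm
    have hnorm_ge : N / mu n ≤ lorentzPredualNorm w (x n) := by
      refine le_trans (le_csSup ⟨N, fun r hr => hub m r hr⟩ hr0) ?_
      exact le_ciSup ⟨N, by rintro _ ⟨k, rfl⟩; exact hsSup_le k⟩ m
    -- compare N / mu n with the target
    have hA0 : 0 ≤ ∑ k ∈ Finset.range n, Real.log ((k:ℝ) + 1) / ((k:ℝ) + 1) := by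
      apply Finset.sum_nonneg
      intro i _
      have : (0:ℝ) ≤ Real.log ((i:ℝ)+1) := Real.log_nonneg (by push_cast; linarith [Nat.cast_nonneg (α := ℝ) i])
      positivity
    have hAN : (∑ k ∈ Finset.range n, Real.log ((k:ℝ) + 1) / ((k:ℝ) + 1)) ≤ N := by
      apply Finset.sum_le_sum
      intro i _
      rw [abs_of_nonneg (hxnonneg n i), hxval, if_pos ‹i ∈ Finset.range n›]
      have hlog : Real.log ((i:ℝ)+1) ≤ mu (i+1) := by
        rw [hmuh]
        refine le_trans ?_ (log_add_one_le_harmonic (i+1))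
        apply Real.log_le_log (by positivity)
        push_cast; linarith
      have hi1 : (0:ℝ) < (i:ℝ) + 1 := by positivity
      exact div_le_div₀ (hmu_nonneg (i+1)) hlog hi1 le_rfl
    have hmupos : 0 < mu n := lt_of_lt_of_le one_pos (hm ▸ hmu_one_le m)
    have hmule : mu n ≤ 1 + Real.log n := by
      rw [hmuh]
      exact harmonic_le_one_add_log n
    have h1L : 0 < 1 + Real.log n := by
      have : (0:ℝ) ≤ Real.log n := Real.log_nonneg (by exact_mod_cast hn.trans' (by norm_num))
      linarith
    calc (1 / (1 + Real.log n)) * ∑ k ∈ Finset.range n, Real.log ((k:ℝ) + 1) / ((k:ℝ) + 1)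
        = (∑ k ∈ Finset.range n, Real.log ((k:ℝ) + 1) / ((k:ℝ) + 1)) / (1 + Real.log n) := by
          rw [one_div_mul_eq_div]
      _ ≤ N / mu n := div_le_div₀ hN0 hAN hmupos hmule
      _ ≤ _ := hnorm_ge
  -- second inequality
  have hsecond : ∀ n : ℕ, 3 ≤ n →
      (Real.log n ^ 2 - Real.log 3 ^ 2) / (2 * (1 + Real.log n))
        ≤ (1 / (1 + Real.log n)) * ∑ k ∈ Finset.range n, Real.log ((k:ℝ) + 1) / ((k:ℝ) + 1) := by
    intro n hn
    have hlogn : (0:ℝ) ≤ Real.log n := Real.log_nonneg (by exact_mod_cast hn.trans' (by norm_num))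
    have h1L : 0 < 1 + Real.log n := by linarith
    have hS := sum_log_div_ge n hn
    have hmono : Real.log (n:ℝ) ^ 2 ≤ Real.log ((n:ℝ)+1) ^ 2 := by
      have h1 : Real.log (n:ℝ) ≤ Real.log ((n:ℝ)+1) := by
        apply Real.log_le_log (by exact_mod_cast lt_of_lt_of_le three_pos (by exact_mod_cast hn))
        linarith
      nlinarith
    have key : (Real.log n ^ 2 - Real.log 3 ^ 2) / 2
        ≤ ∑ k ∈ Finset.range n, Real.log ((k:ℝ) + 1) / ((k:ℝ) + 1) := by
      refine le_trans ?_ hS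
      gcongr
    have hne : (1 + Real.log n) ≠ 0 := ne_of_gt h1L
    have heq : (Real.log n ^ 2 - Real.log 3 ^ 2) / (2 * (1 + Real.log n))
        = (1 / (1 + Real.log n)) * ((Real.log n ^ 2 - Real.log 3 ^ 2) / 2) := by
      rw [one_div_mul_eq_div, div_div]
    rw [heq]
    exact mul_le_mul_of_nonneg_left key (by positivity)
  refine ⟨fun n hn => ⟨hmain n hn, hsecond n hn⟩, ?_⟩
  rintro ⟨B, hB⟩
  have hc0 : (0:ℝ) ≤ Real.log 3 ^ 2 := sq_nonneg _
  have hlog3 : Real.log 3 < 2 := by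
    have := Real.log_lt_sub_one_of_pos (by norm_num : (0:ℝ) < 3) (by norm_num)
    linarith
  have hlog3' : (0:ℝ) ≤ Real.log 3 := Real.log_nonneg (by norm_num)
  have hc4 : Real.log 3 ^ 2 ≤ 4 := by nlinarith
  set c := Real.log 3 ^ 2 with hcdef
  set M : ℝ := max 2 (3 * B + c + 1) with hMdef
  set n := ⌈Real.exp M⌉₊ with hndef
  have hexp : Real.exp M ≤ n := Nat.le_ceil _
  have hM2 : (2:ℝ) ≤ M := le_max_left _ _
  have hMB : 3 * B + c + 1 ≤ M := le_max_right _ _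
  have hexp3 : (3:ℝ) ≤ Real.exp M := by
    have h1 : (2:ℝ) + 1 ≤ Real.exp 2 := Real.add_one_le_exp 2
    have h2 : Real.exp 2 ≤ Real.exp M := Real.exp_le_exp.mpr hM2
    linarith
  have hn3 : 3 ≤ n := by
    have : (3:ℝ) ≤ (n:ℝ) := hexp3.trans hexp
    exact_mod_cast this
  have hLM : M ≤ Real.log n := by
    rw [← Real.log_exp M]
    exact Real.log_le_log (Real.exp_pos M) hexp
  set L := Real.log (n:ℝ) with hLdef
  have hL2 : (2:ℝ) ≤ L := hM2.trans hLM
  have hLB : 3 * B + c + 1 ≤ L := hMB.trans hLM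
  obtain ⟨h1, h2⟩ := (fun n hn => ⟨hmain n hn, hsecond n hn⟩ :
    ∀ n : ℕ, 3 ≤ n → _ ∧ _) n hn3
  have hfinal : (L ^ 2 - c) / (2 * (1 + L)) ≤ B := le_trans (h2.trans h1) (hB n)
  have hpos : (0:ℝ) < 2 * (1 + L) := by linarith
  rw [div_le_iff₀ hpos] at hfinal
  nlinarith [mul_nonneg (show (0:ℝ) ≤ L - c - 1 - 3 * B by linarith)
    (show (0:ℝ) ≤ 1 + L by linarith), mul_nonneg hc0 (show (0:ℝ) ≤ L by linarith),
    sq_nonneg (L - 2)]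


end
end
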